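/- arXiv:2404.08319 — 6 statements merged into one kernel-verified Lean document; each statement's English description precedes it below -/
import Mathlib

section
/- Let h:[0,b]→[0,∞) be concave with positive integral and let α>0. Then the α-powered centroid g_α(h) = (∫_0^b t h(t)^α dt)/(∫_0^b h(t)^α dt) satisfies (b - g_α(h))/b ≥ 1/(α+2). -/
open MeasureTheory Set intervalIntegral

lemma aux_ratio {b : ℝ} {h : ℝ → ℝ}
    (hconc : ConcaveOn ℝ (Set.Icc 0 b) h) (h0 : 0 ≤ h 0)
    {s t : ℝ} (hs : 0 ≤ s) (hst : s ≤ t) (htb : t ≤ b) :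
    s * h t ≤ t * h s := by
  rcases eq_or_lt_of_le (hs.trans hst) with ht0 | ht0
  · have hs0 : s = 0 := le_antisymm (hst.trans ht0.symm.le) hs
    simp [hs0, ← ht0]
  · have ha : (0:ℝ) ≤ s / t := div_nonneg hs ht0.le
    have hb' : (0:ℝ) ≤ 1 - s / t := by
      have := (div_le_one ht0).2 hst; linarith
    have key := hconc.2 (Set.mem_Icc.2 ⟨ht0.le, htb⟩)
      (Set.mem_Icc.2 ⟨le_refl (0:ℝ), (ht0.trans_le htb).le⟩) ha hb' (by ring)
    simp only [smul_eq_mul, mul_zero, add_zero] at key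
    rw [div_mul_cancel₀ _ ht0.ne'] at key
    have h1 : s / t * h t ≤ h s := by nlinarith [mul_nonneg hb' h0]
    rw [div_mul_eq_mul_div, div_le_iff₀ ht0] at h1
    linarith

lemma aux_ratio2 {b : ℝ} {h : ℝ → ℝ}
    (hconc : ConcaveOn ℝ (Set.Icc 0 b) h) (hB : 0 ≤ h b)
    {s t : ℝ} (hs : 0 ≤ s) (hst : s ≤ t) (htb : t ≤ b) :
    (b - t) * h s ≤ (b - s) * h t := by
  rcases eq_or_lt_of_le (hst.trans htb) with hsb | hsb
  · have : t = b := le_antisymm htb (hsb ▸ hst)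
    simp [hsb, this]
  · have hbs : 0 < b - s := by linarith
    have ha : (0:ℝ) ≤ (b - t) / (b - s) := div_nonneg (by linarith) hbs.le
    have hb' : (0:ℝ) ≤ 1 - (b - t) / (b - s) := by
      have : (b - t) / (b - s) ≤ 1 := (div_le_one hbs).2 (by linarith)
      linarith
    have key := hconc.2 (Set.mem_Icc.2 ⟨hs, hsb.le ⟩)
      (Set.mem_Icc.2 ⟨(hs.trans (hst.trans htb)), le_refl b⟩) ha hb' (by ring)
    simp only [smul_eq_mul] at key
    have harg : (b - t) / (b - s) * s + (1 - (b - t) / (b - s)) * b = t := by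
      field_simp; ring
    rw [harg] at key
    have h1 : (b - t) / (b - s) * h s ≤ h t := by nlinarith [mul_nonneg hb' hB]
    rw [div_mul_eq_mul_div, div_le_iff₀ hbs] at h1
    linarith

set_option maxHeartbeats 1000000 in
theorem stmt_6 (b α : ℝ) (h : ℝ → ℝ) (hb : 0 < b) (hα : 0 < α)
    (hconc : ConcaveOn ℝ (Set.Icc 0 b) h)
    (hnn : ∀ t ∈ Set.Icc (0 : ℝ) b, 0 ≤ h t)
    (hint : 0 < ∫ t in (0 : ℝ)..b, h t) :
    (b - (∫ t in (0 : ℝ)..b, t * h t ^ α) / (∫ t in (0 : ℝ)..b, h t ^ α)) / b ≥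
      1 / (α + 2) := by
  have h0 : 0 ≤ h 0 := hnn 0 ⟨le_refl 0, hb.le⟩
  have hB : 0 ≤ h b := hnn b ⟨hb.le, le_refl b⟩
  have hbh : 0 ≤ h (b/2) := hnn _ ⟨by linarith, by linarith⟩
  set M : ℝ := 2 * h (b/2) with hM_def
  have hMnn : 0 ≤ M := by positivity
  -- boundedness
  have hM : ∀ t ∈ Set.Icc (0:ℝ) b, h t ≤ M := by
    intro t ht
    obtain ⟨ht0, htb⟩ := ht
    rcases le_total t (b/2) with hc | hc
    · have key := aux_ratio2 hconc hB ht0 hc (by linarith)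
      -- (b - b/2) * h t ≤ (b - t) * h (b/2)
      have h2 : (b - t) * h (b/2) ≤ b * h (b/2) := by nlinarith
      nlinarith
    · have key := aux_ratio hconc h0 (by linarith : (0:ℝ) ≤ b/2) hc htb
      -- (b/2) * h t ≤ t * h (b/2)
      have h2 : t * h (b/2) ≤ b * h (b/2) := by nlinarith
      nlinarith
  -- measurability
  have hmeas : AEStronglyMeasurable h (volume.restrict (Set.Ioc 0 b)) := by
    have hc : ContinuousOn h (Set.Ioo 0 b) := by
      have := hconc.continuousOn_interior
      rwa [interior_Icc] at this
    have h1 : AEStronglyMeasurable h (volume.restrict (Set.Ioo 0 b)) :=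
      hc.aestronglyMeasurable measurableSet_Ioo
    rwa [Measure.restrict_congr_set Ioo_ae_eq_Ioc] at h1
  have hmeasα : AEStronglyMeasurable (fun t => h t ^ α) (volume.restrict (Set.Ioc 0 b)) := by
    have hm : Measurable (fun x : ℝ => x ^ α) := by measurability
    exact (hm.comp_aemeasurable hmeas.aemeasurable).aestronglyMeasurable
  -- integrability
  have hint1 : IntervalIntegrable (fun t => h t ^ α) volume 0 b := by
    rw [intervalIntegrable_iff_integrableOn_Ioc_of_le hb.le]
    refine Integrable.mono' (integrable_const (M ^ α)) hmeasα ?_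
    filter_upwards [ae_restrict_mem measurableSet_Ioc] with t ht
    rw [Real.norm_eq_abs, abs_of_nonneg (Real.rpow_nonneg (hnn t ⟨ht.1.le, ht.2⟩) α)]
    exact Real.rpow_le_rpow (hnn t ⟨ht.1.le, ht.2⟩) (hM t ⟨ht.1.le, ht.2⟩) hα.le
  have hint2 : IntervalIntegrable (fun t => t * h t ^ α) volume 0 b := by
    rw [intervalIntegrable_iff_integrableOn_Ioc_of_le hb.le]
    refine Integrable.mono' (integrable_const (b * M ^ α)) (aestronglyMeasurable_id.mul hmeasα) ?_
    filter_upwards [ae_restrict_mem measurableSet_Ioc] with t ht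
    have h1 : 0 ≤ h t ^ α := Real.rpow_nonneg (hnn t ⟨ht.1.le, ht.2⟩) α
    rw [Real.norm_eq_abs, abs_of_nonneg (mul_nonneg ht.1.le h1)]
    exact mul_le_mul ht.2 (Real.rpow_le_rpow (hnn t ⟨ht.1.le, ht.2⟩) (hM t ⟨ht.1.le, ht.2⟩) hα.le)
      h1 hb.le
  -- positivity of h on Ioo
  have hpos : ∀ x ∈ Set.Ioo (0:ℝ) b, 0 < h x := by
    have hex : ∃ c ∈ Set.Ioo (0:ℝ) b, 0 < h c := by
      by_contra hcon
      push_neg at hcon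
      have hzero : ∫ t in (0:ℝ)..b, h t = ∫ t in (0:ℝ)..b, (0:ℝ) := by
        apply intervalIntegral.integral_congr_ae
        have hne : ∀ᵐ x : ℝ ∂volume, x ≠ b := by
          refine (MeasureTheory.ae_iff).2 ?_
          simp only [ne_eq, not_not]; simpa using Real.volume_singleton (a := b)
        filter_upwards [hne] with x hx hxI
        rw [Set.uIoc_of_le hb.le] at hxI
        have hxo : x ∈ Set.Ioo (0:ℝ) b := ⟨hxI.1, lt_of_le_of_ne hxI.2 hx⟩
        exact le_antisymm (hcon x hxo) (hnn x ⟨hxo.1.le, hxo.2.le⟩)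
      rw [hzero, intervalIntegral.integral_zero] at hint
      exact lt_irrefl 0 hint
    obtain ⟨c, hcmem, hcpos⟩ := hex
    intro x hx
    rcases le_total x c with hxc | hxc
    · have key := aux_ratio hconc h0 hx.1.le hxc hcmem.2.le
      nlinarith [hx.1]
    · have key := aux_ratio2 hconc hB hcmem.1.le hxc hx.2.le
      nlinarith [hx.2, hcmem.2]
  -- denominator positive
  have hD : 0 < ∫ t in (0:ℝ)..b, h t ^ α :=
    intervalIntegral_pos_of_pos_on hint1
      (fun x hx => Real.rpow_pos_of_pos (hpos x hx) α) hb
  -- set up t₀ and c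
  set t₀ : ℝ := (α+1)*b/(α+2) with ht₀_def
  have hα2 : (0:ℝ) < α + 2 := by linarith
  have ht₀pos : 0 < t₀ := by positivity
  have ht₀b : t₀ ≤ b := by
    rw [ht₀_def, div_le_iff₀ hα2]; nlinarith
  have ht₀α : 0 < t₀ ^ α := Real.rpow_pos_of_pos ht₀pos α
  set c : ℝ := h t₀ ^ α / t₀ ^ α with hc_def
  have hcnn : 0 ≤ c := div_nonneg (Real.rpow_nonneg (hnn t₀ ⟨ht₀pos.le, ht₀b⟩) α) ht₀α.le
  -- pointwise inequality
  have hpt : ∀ t ∈ Set.Icc (0:ℝ) b,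
      c * (((α+1)*b) * t ^ α - (α+2) * t ^ (α+1)) ≤
      ((α+1)*b) * h t ^ α - (α+2) * (t * h t ^ α) := by
    intro t ht
    obtain ⟨ht0, htb⟩ := ht
    have htα : 0 ≤ t ^ α := Real.rpow_nonneg ht0 α
    have hrw : t ^ (α+1) = t * t ^ α := by
      rcases eq_or_lt_of_le ht0 with h' | h'
      · rw [← h', Real.zero_rpow (by linarith), Real.zero_rpow hα.ne', mul_zero]
      · rw [Real.rpow_add h', Real.rpow_one]; ring
    rw [hrw]
    have hw : c * (((α+1)*b) * t ^ α - (α+2) * (t * t ^ α)) =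
        ((α+1)*b - (α+2)*t) * (c * t ^ α) := by ring
    have hw2 : ((α+1)*b) * h t ^ α - (α+2) * (t * h t ^ α) =
        ((α+1)*b - (α+2)*t) * h t ^ α := by ring
    rw [hw, hw2]
    have htnn : 0 ≤ h t := hnn t ⟨ht0, htb⟩
    have ht₀nn : 0 ≤ h t₀ := hnn t₀ ⟨ht₀pos.le, ht₀b⟩
    rcases le_total t t₀ with hcase | hcase
    · -- w ≥ 0 and c * t^α ≤ h t ^ α
      have hwpos : 0 ≤ (α+1)*b - (α+2)*t := by
        have he : (α+2) * t₀ = (α+1)*b := by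
          rw [ht₀_def]; field_simp
        nlinarith
      have key := aux_ratio hconc h0 ht0 hcase ht₀b
      -- t * h t₀ ≤ t₀ * h t
      have key2 : (t * h t₀) ^ α ≤ (t₀ * h t) ^ α :=
        Real.rpow_le_rpow (mul_nonneg ht0 ht₀nn) key hα.le
      rw [Real.mul_rpow ht0 ht₀nn, Real.mul_rpow ht₀pos.le htnn] at key2
      have : c * t ^ α ≤ h t ^ α := by
        rw [hc_def, div_mul_eq_mul_div, div_le_iff₀ ht₀α]
        linarith [key2]
      exact mul_le_mul_of_nonneg_left this hwpos
    · -- w ≤ 0 and h t ^ α ≤ c * t^α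
      have hwneg : (α+1)*b - (α+2)*t ≤ 0 := by
        have he : (α+2) * t₀ = (α+1)*b := by
          rw [ht₀_def]; field_simp
        nlinarith
      have key := aux_ratio hconc h0 ht₀pos.le hcase htb
      -- t₀ * h t ≤ t * h t₀
      have key2 : (t₀ * h t) ^ α ≤ (t * h t₀) ^ α :=
        Real.rpow_le_rpow (mul_nonneg ht₀pos.le htnn) key hα.le
      rw [Real.mul_rpow ht0 ht₀nn, Real.mul_rpow ht₀pos.le htnn] at key2
      have : h t ^ α ≤ c * t ^ α := by
        rw [hc_def, div_mul_eq_mul_div, le_div_iff₀ ht₀α]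
        linarith [key2]
      exact mul_le_mul_of_nonpos_left (by linarith) (by linarith)
  -- integrate
  have hgint : IntervalIntegrable
      (fun t => c * (((α+1)*b) * t ^ α - (α+2) * t ^ (α+1))) volume 0 b := by
    apply IntervalIntegrable.const_mul
    exact ((intervalIntegrable_rpow (Or.inl hα.le)).const_mul _).sub
      ((intervalIntegrable_rpow (Or.inl (by linarith))).const_mul _)
  have hfint : IntervalIntegrable
      (fun t => ((α+1)*b) * h t ^ α - (α+2) * (t * h t ^ α)) volume 0 b :=
    (hint1.const_mul _).sub (hint2.const_mul _)
  have hmono := intervalIntegral.integral_mono_on hb.le hgint hfint hpt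
  -- compute LHS = 0
  have hL : ∫ t in (0:ℝ)..b, c * (((α+1)*b) * t ^ α - (α+2) * t ^ (α+1)) = 0 := by
    rw [intervalIntegral.integral_const_mul, intervalIntegral.integral_sub
      ((intervalIntegrable_rpow (Or.inl hα.le)).const_mul _)
      ((intervalIntegrable_rpow (Or.inl (by linarith))).const_mul _),
      intervalIntegral.integral_const_mul, intervalIntegral.integral_const_mul,
      integral_rpow (Or.inl (by linarith)), integral_rpow (Or.inl (by linarith))]
    rw [Real.zero_rpow (by linarith), Real.zero_rpow (by linarith)]
    have e1 : b ^ (α + 1 + 1) = b ^ (α + 1) * b := by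
      rw [Real.rpow_add hb, Real.rpow_one]
    rw [e1, sub_zero, sub_zero]
    have d1 : (α+1)*b * (b ^ (α+1) / (α+1)) = b * b ^ (α+1) := by
      field_simp
    have d2 : (α+2) * (b ^ (α+1) * b / (α+1+1)) = b ^ (α+1) * b := by
      have he : (α:ℝ)+1+1 = α+2 := by ring
      rw [he]
      field_simp
    rw [d1, d2]
    ring
  -- compute RHS
  have hR : ∫ t in (0:ℝ)..b, (((α+1)*b) * h t ^ α - (α+2) * (t * h t ^ α)) =
      ((α+1)*b) * (∫ t in (0:ℝ)..b, h t ^ α) - (α+2) * ∫ t in (0:ℝ)..b, t * h t ^ α := by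
    rw [intervalIntegral.integral_sub (hint1.const_mul _) (hint2.const_mul _),
      intervalIntegral.integral_const_mul, intervalIntegral.integral_const_mul]
  rw [hL, hR] at hmono
  -- conclude
  set D : ℝ := ∫ t in (0:ℝ)..b, h t ^ α
  set N : ℝ := ∫ t in (0:ℝ)..b, t * h t ^ α
  have h2 : (α+2) * (N / D) ≤ (α+1) * b := by
    rw [← mul_le_mul_iff_of_pos_right hD]
    calc (α+2) * (N/D) * D = (α+2) * N := by
          rw [mul_assoc, div_mul_cancel₀ _ hD.ne']
      _ ≤ (α+1) * b * D := by linarith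
  rw [ge_iff_le, div_le_div_iff₀ hα2 hb]
  nlinarith [h2]
end

section
/- Let h:[a,b]→[0,∞) be a concave function with positive integral and let α>0. Let g_α(h) = (∫_a^b t h(t)^α dt)/(∫_a^b h(t)^α dt). Then h(g_α(h)) ≥ ((α+1)/(α+2)) · sup_{t∈[a,b]} h(t). -/
open Set MeasureTheory intervalIntegral
set_option maxHeartbeats 1000000

lemma conc_chord {a b : ℝ} {h : ℝ → ℝ} (hconc : ConcaveOn ℝ (Set.Icc a b) h)
    {x y z : ℝ} (hx : x ∈ Set.Icc a b) (hz : z ∈ Set.Icc a b)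
    (hxy : x ≤ y) (hyz : y ≤ z) :
    (z - y) * h x + (y - x) * h z ≤ (z - x) * h y := by
  rcases eq_or_lt_of_le (hxy.trans hyz) with rfl | hxz
  · have : y = x := le_antisymm hyz hxy
    subst this; simp
  · set θ : ℝ := (z - y) / (z - x) with hθ
    have hzx : (0:ℝ) < z - x := by linarith
    have hθ0 : 0 ≤ θ := by
      apply div_nonneg (by linarith) hzx.le
    have hθ1 : 0 ≤ 1 - θ := by
      rw [hθ, sub_nonneg, div_le_one hzx]; linarith
    have hsum : θ + (1 - θ) = 1 := by ring
    have hcomb := hconc.2 hx hz hθ0 hθ1 hsum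
    have hpt : θ • x + (1 - θ) • z = y := by
      simp only [smul_eq_mul, hθ]
      field_simp
      ring
    rw [hpt] at hcomb
    have h2 := mul_le_mul_of_nonneg_left hcomb hzx.le
    simp only [smul_eq_mul] at h2
    have hexp : (z - x) * (θ * h x + (1 - θ) * h z) = (z - y) * h x + (y - x) * h z := by
      have hθ' : θ * (z - x) = z - y := by rw [hθ]; exact div_mul_cancel₀ _ hzx.ne'
      linear_combination (h x - h z) * hθ'
    linarith [hexp ▸ h2]

lemma conc_bound {a b : ℝ} {h : ℝ → ℝ} (hab : a < b) (hconc : ConcaveOn ℝ (Set.Icc a b) h)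
    (hnn : ∀ t ∈ Set.Icc a b, 0 ≤ h t) :
    ∀ t ∈ Set.Icc a b, h t ≤ 2 * h ((a + b) / 2) := by
  intro t ht
  set p : ℝ := (a + b) / 2 with hp
  have hpmem : p ∈ Set.Icc a b := ⟨by simp [hp]; linarith, by simp [hp]; linarith⟩
  rcases le_total t p with htp | hpt
  · have := conc_chord hconc ht (right_mem_Icc.2 hab.le) htp (by simp [hp]; linarith)
    -- (b - p) * h t + (p - t) * h b ≤ (b - t) * h p
    have h1 : 0 ≤ h b := hnn b (right_mem_Icc.2 hab.le)
    have h2 : 0 ≤ h p := hnn p hpmem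
    have h3 : 0 ≤ h t := hnn t ht
    have hbp : b - p = (b - a) / 2 := by rw [hp]; ring
    nlinarith [ht.1, ht.2]
  · have := conc_chord hconc (left_mem_Icc.2 hab.le) ht (by simp [hp]; linarith) hpt
    have h1 : 0 ≤ h a := hnn a (left_mem_Icc.2 hab.le)
    have h2 : 0 ≤ h p := hnn p hpmem
    have h3 : 0 ≤ h t := hnn t ht
    have hbp : p - a = (b - a) / 2 := by rw [hp]; ring
    nlinarith [ht.1, ht.2]

lemma key_integrable {a b α : ℝ} {h : ℝ → ℝ} (hab : a < b) (hα : 0 < α)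
    (hconc : ConcaveOn ℝ (Set.Icc a b) h)
    (hnn : ∀ t ∈ Set.Icc a b, 0 ≤ h t) (φ : ℝ → ℝ) (hφ : Continuous φ) :
    IntervalIntegrable (fun t => φ t * h t ^ α) volume a b := by
  have hcont : ContinuousOn h (Set.Ioo a b) := by
    have := hconc.continuousOn_interior
    rwa [interior_Icc] at this
  have hmeas : AEStronglyMeasurable (fun t => φ t * h t ^ α)
      (volume.restrict (Set.Ioo a b)) := by
    apply ContinuousOn.aestronglyMeasurable _ measurableSet_Ioo
    exact (hφ.continuousOn).mul (hcont.rpow_const (fun x _ => Or.inr hα.le))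
  obtain ⟨C, hC⟩ : ∃ C, ∀ t ∈ Set.Icc a b, ‖φ t‖ ≤ C :=
    (isCompact_Icc.exists_bound_of_continuousOn hφ.continuousOn)
  have hCnn : 0 ≤ C := le_trans (norm_nonneg _) (hC a (left_mem_Icc.2 hab.le))
  set D : ℝ := 2 * h ((a + b) / 2) with hD
  have hDnn : 0 ≤ D := by
    have := hnn ((a+b)/2) ⟨by linarith, by linarith⟩
    simp [hD]; linarith
  have hIoo : IntegrableOn (fun t => φ t * h t ^ α) (Set.Ioo a b) volume := by
    refine ⟨hmeas, HasFiniteIntegral.restrict_of_bounded (C := C * D ^ α) measure_Ioo_lt_top ?_⟩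
    rw [ae_restrict_iff' measurableSet_Ioo]
    filter_upwards with t ht
    have htI : t ∈ Set.Icc a b := Ioo_subset_Icc_self ht
    have h0 : 0 ≤ h t := hnn t htI
    have h1 : h t ≤ D := conc_bound hab hconc hnn t htI
    rw [norm_mul]
    have h2 : ‖h t ^ α‖ ≤ D ^ α := by
      rw [Real.norm_eq_abs, abs_of_nonneg (Real.rpow_nonneg h0 α)]
      exact Real.rpow_le_rpow h0 h1 hα.le
    exact mul_le_mul (hC t htI) h2 (norm_nonneg _) hCnn
  rw [intervalIntegrable_iff_integrableOn_Ioc_of_le hab.le]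
  exact hIoo.congr_set_ae Ioo_ae_eq_Ioc.symm

lemma pow_int_pos {a b α : ℝ} {h : ℝ → ℝ} (hab : a < b) (hα : 0 < α)
    (hconc : ConcaveOn ℝ (Set.Icc a b) h)
    (hnn : ∀ t ∈ Set.Icc a b, 0 ≤ h t)
    (hint : 0 < ∫ t in a..b, h t) :
    0 < ∫ t in a..b, h t ^ α := by
  -- find a point with positive value
  obtain ⟨t0, ht0, ht0pos⟩ : ∃ t0 ∈ Set.Ioo a b, 0 < h t0 := by
    by_contra hcon
    push_neg at hcon
    have hzero : ∀ t ∈ Set.Ioo a b, h t = 0 := fun t ht =>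
      le_antisymm (hcon t ht) (hnn t (Ioo_subset_Icc_self ht))
    have : (∫ t in a..b, h t) = 0 := by
      rw [intervalIntegral.integral_of_le hab.le,
        ← MeasureTheory.setIntegral_congr_set Ioo_ae_eq_Ioc]
      rw [MeasureTheory.setIntegral_congr_fun measurableSet_Ioo hzero]
      simp
    linarith
  set u : ℝ := (t0 + b) / 2 with hu
  have ht0b : t0 < b := ht0.2
  have htu : t0 < u := by rw [hu]; linarith
  have hub : u < b := by rw [hu]; linarith
  have hat0 : a < t0 := ht0.1
  -- on [t0, u], h t ≥ h t0 / 2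
  have hlow : ∀ t ∈ Set.Icc t0 u, h t0 / 2 ≤ h t := by
    intro t ht
    have hmem : t ∈ Set.Icc a b := ⟨by linarith [ht.1], by linarith [ht.2]⟩
    have hch := conc_chord hconc (Ioo_subset_Icc_self ht0) (right_mem_Icc.2 hab.le)
      ht.1 (by linarith [ht.2])
    have hb0 : 0 ≤ h b := hnn b (right_mem_Icc.2 hab.le)
    nlinarith [ht.1, ht.2]
  have hint1 : IntervalIntegrable (fun t => h t ^ α) volume a b := by
    have := key_integrable hab hα hconc hnn (fun _ => (1:ℝ)) continuous_const
    simpa using this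
  have hsub1 : IntervalIntegrable (fun t => h t ^ α) volume a t0 := by
    apply hint1.mono_set
    rw [Set.uIcc_of_le hat0.le, Set.uIcc_of_le hab.le]
    exact Set.Icc_subset_Icc le_rfl ht0b.le
  have hsub2 : IntervalIntegrable (fun t => h t ^ α) volume t0 u := by
    apply hint1.mono_set
    rw [Set.uIcc_of_le htu.le, Set.uIcc_of_le hab.le]
    exact Set.Icc_subset_Icc hat0.le hub.le
  have hsub3 : IntervalIntegrable (fun t => h t ^ α) volume u b := by
    apply hint1.mono_set
    rw [Set.uIcc_of_le hub.le, Set.uIcc_of_le hab.le]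
    exact Set.Icc_subset_Icc (by linarith) le_rfl
  have hsplit : (∫ t in a..b, h t ^ α) =
      (∫ t in a..t0, h t ^ α) + (∫ t in t0..u, h t ^ α) + (∫ t in u..b, h t ^ α) := by
    rw [add_assoc, intervalIntegral.integral_add_adjacent_intervals hsub2 hsub3,
      intervalIntegral.integral_add_adjacent_intervals hsub1 (hsub2.trans hsub3)]
  have h1 : 0 ≤ ∫ t in a..t0, h t ^ α :=
    intervalIntegral.integral_nonneg hat0.le (fun t ht =>
      Real.rpow_nonneg (hnn t ⟨ht.1, by linarith [ht.2]⟩) α)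
  have h3 : 0 ≤ ∫ t in u..b, h t ^ α :=
    intervalIntegral.integral_nonneg hub.le (fun t ht =>
      Real.rpow_nonneg (hnn t ⟨by linarith [ht.1], ht.2⟩) α)
  have h2 : (u - t0) * (h t0 / 2) ^ α ≤ ∫ t in t0..u, h t ^ α := by
    have := intervalIntegral.integral_mono_on htu.le
      (_root_.intervalIntegrable_const (c := (h t0 / 2) ^ α)) hsub2
      (fun t ht => Real.rpow_le_rpow (by positivity) (hlow t ht) hα.le)
    simpa [smul_eq_mul] using this
  have hpos : 0 < (u - t0) * (h t0 / 2) ^ α := by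
    apply mul_pos (by linarith)
    exact Real.rpow_pos_of_pos (by linarith) α
  linarith

lemma core_pos {a b α : ℝ} {h : ℝ → ℝ} (hab : a < b) (hα : 0 < α)
    (hconc : ConcaveOn ℝ (Set.Icc a b) h)
    (hnn : ∀ t ∈ Set.Icc a b, 0 ≤ h t)
    {g m : ℝ} (hga : a ≤ g) (hmb : m ≤ b) (hgm : g < m)
    (hmpos : 0 < h m) (hlt : h g < (α + 1) / (α + 2) * h m) :
    0 < ∫ t in a..b, (t - g) * h t ^ α := by
  have hgb : g ≤ b := le_trans hgm.le hmb
  have ham : a ≤ m := le_trans hga hgm.le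
  have hgmem : g ∈ Set.Icc a b := ⟨hga, hgb⟩
  have hmmem : m ∈ Set.Icc a b := ⟨ham, hmb⟩
  set h0 : ℝ := h g with hh0
  set M : ℝ := h m with hM
  have hα2 : (0:ℝ) < α + 2 := by linarith
  have hα1 : (0:ℝ) < α + 1 := by linarith
  have hc1 : (α + 1) / (α + 2) < 1 := by
    rw [div_lt_one hα2]; linarith
  have h0nn : 0 ≤ h0 := hnn g hgmem
  have h0M : h0 < M := lt_of_lt_of_le hlt (by nlinarith)
  have hmg : (0:ℝ) < m - g := by linarith
  set s : ℝ := (M - h0) / (m - g) with hs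
  have hspos : 0 < s := div_pos (by linarith) hmg
  set z : ℝ := g - h0 / s with hz
  have key1 : s * (g - z) = h0 := by
    rw [hz]; field_simp; ring
  have hs3 : s * (m - g) = M - h0 := by
    rw [hs]; field_simp
  -- F1 : upper chord bound on [a, g]
  have F1 : ∀ t ∈ Set.Icc a g, h t ≤ s * (t - z) := by
    intro t ht
    rcases eq_or_lt_of_le ht.2 with rfl | htg
    · rw [key1]
    · have hch := conc_chord hconc (⟨ht.1, le_trans ht.2 hgb⟩ : t ∈ Set.Icc a b)
        hmmem ht.2 hgm.le
      -- (m - g) * h t + (g - t) * M ≤ (m - t) * h0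
      have e1 : s * (t - z) * (m - g) = (M - h0) * (t - g) + h0 * (m - g) := by
        linear_combination (t - g) * hs3 + (m - g) * key1
      have : h t * (m - g) ≤ s * (t - z) * (m - g) := by nlinarith
      exact le_of_mul_le_mul_right this hmg
  -- F2 : lower chord bound on [g, m]
  have F2 : ∀ t ∈ Set.Icc g m, s * (t - z) ≤ h t := by
    intro t ht
    have hch := conc_chord hconc hgmem hmmem ht.1 ht.2
    -- (m - t) * h0 + (t - g) * M ≤ (m - g) * h t
    have e2 : s * (t - z) * (m - g) = (m - t) * h0 + (t - g) * M := by
      linear_combination (t - g) * hs3 + (m - g) * key1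
    have : s * (t - z) * (m - g) ≤ h t * (m - g) := by nlinarith
    exact le_of_mul_le_mul_right this hmg
  have hza : z ≤ a := by
    have h1 : h a ≤ s * (a - z) := F1 a ⟨le_rfl, hga⟩
    have h2 : 0 ≤ h a := hnn a ⟨le_rfl, hab.le⟩
    nlinarith
  -- integrability of the main integrand and its restrictions
  have hIab : IntervalIntegrable (fun t => (t - g) * h t ^ α) volume a b :=
    key_integrable hab hα hconc hnn (fun t => t - g) (continuous_id.sub continuous_const)
  have hIag : IntervalIntegrable (fun t => (t - g) * h t ^ α) volume a g := by
    apply hIab.mono_set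
    rw [Set.uIcc_of_le hga, Set.uIcc_of_le hab.le]
    exact Set.Icc_subset_Icc le_rfl hgb
  have hIgm : IntervalIntegrable (fun t => (t - g) * h t ^ α) volume g m := by
    apply hIab.mono_set
    rw [Set.uIcc_of_le hgm.le, Set.uIcc_of_le hab.le]
    exact Set.Icc_subset_Icc hga hmb
  have hImb : IntervalIntegrable (fun t => (t - g) * h t ^ α) volume m b := by
    apply hIab.mono_set
    rw [Set.uIcc_of_le hmb, Set.uIcc_of_le hab.le]
    exact Set.Icc_subset_Icc ham le_rfl
  -- the linear comparison integrand
  set L : ℝ → ℝ := fun t => (t - g) * (s * (t - z)) ^ α with hL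
  have hLcont : Continuous L := by
    apply (continuous_id.sub continuous_const).mul
    exact ((continuous_const.mul (continuous_id.sub continuous_const)).rpow_const
      (fun x => Or.inr hα.le))
  have hLag : IntervalIntegrable L volume a g := hLcont.intervalIntegrable a g
  have hLgm : IntervalIntegrable L volume g m := hLcont.intervalIntegrable g m
  have hLam : IntervalIntegrable L volume a m := hLcont.intervalIntegrable a m
  -- comparison on [a, g]
  have C1 : (∫ t in a..g, L t) ≤ ∫ t in a..g, (t - g) * h t ^ α := by
    apply intervalIntegral.integral_mono_on hga hLag hIag
    intro t ht
    have h1 : h t ^ α ≤ (s * (t - z)) ^ α :=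
      Real.rpow_le_rpow (hnn t ⟨ht.1, le_trans ht.2 hgb⟩) (F1 t ht) hα.le
    have h2 : t - g ≤ 0 := by linarith [ht.2]
    show (t - g) * (s * (t - z)) ^ α ≤ (t - g) * h t ^ α
    nlinarith [mul_nonneg (neg_nonneg.mpr h2) (sub_nonneg.mpr h1)]
  -- comparison on [g, m]
  have C2 : (∫ t in g..m, L t) ≤ ∫ t in g..m, (t - g) * h t ^ α := by
    apply intervalIntegral.integral_mono_on hgm.le hLgm hIgm
    intro t ht
    have htz : 0 ≤ s * (t - z) := by
      apply mul_nonneg hspos.le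
      have : a ≤ t := le_trans hga ht.1
      linarith
    have h1 : (s * (t - z)) ^ α ≤ h t ^ α :=
      Real.rpow_le_rpow htz (F2 t ht) hα.le
    have h2 : 0 ≤ t - g := by linarith [ht.1]
    show (t - g) * (s * (t - z)) ^ α ≤ (t - g) * h t ^ α
    nlinarith [mul_nonneg h2 (sub_nonneg.mpr h1)]
  -- nonnegativity on [m, b]
  have C3 : 0 ≤ ∫ t in m..b, (t - g) * h t ^ α := by
    apply intervalIntegral.integral_nonneg hmb
    intro t ht
    apply mul_nonneg (by linarith [ht.1])
    exact Real.rpow_nonneg (hnn t ⟨le_trans ham ht.1, ht.2⟩) α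
  -- split the full integral
  have hsplit : (∫ t in a..b, (t - g) * h t ^ α) =
      ((∫ t in a..g, (t - g) * h t ^ α) + ∫ t in g..m, (t - g) * h t ^ α)
        + ∫ t in m..b, (t - g) * h t ^ α := by
    rw [intervalIntegral.integral_add_adjacent_intervals hIag hIgm,
      intervalIntegral.integral_add_adjacent_intervals (hIag.trans hIgm) hImb]
  have hLsplit : (∫ t in a..m, L t) = (∫ t in a..g, L t) + ∫ t in g..m, L t :=
    (intervalIntegral.integral_add_adjacent_intervals hLag hLgm).symm
  -- FTC computation of ∫ L
  have hpow1 : ∀ x : ℝ, 0 ≤ x → x ^ (α + 1) = x ^ α * x := by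
    intro x hx
    rcases hx.eq_or_lt with hx0 | hx'
    · rw [← hx0, Real.zero_rpow (by positivity), Real.zero_rpow hα.ne', mul_zero]
    · exact Real.rpow_add_one hx'.ne' α
  have hpow2 : ∀ x : ℝ, 0 ≤ x → x ^ (α + 2) = x ^ (α + 1) * x := by
    intro x hx
    rcases hx.eq_or_lt with hx0 | hx'
    · rw [← hx0, Real.zero_rpow (by positivity), Real.zero_rpow (by positivity), mul_zero]
    · rw [show α + 2 = (α + 1) + 1 by ring, Real.rpow_add_one hx'.ne']
  set F : ℝ → ℝ := fun t => (t - z) ^ (α + 2) / (α + 2)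
    - (g - z) * ((t - z) ^ (α + 1) / (α + 1)) with hF
  have hderiv : ∀ t ∈ Set.uIcc a m, HasDerivAt F ((t - g) * (t - z) ^ α) t := by
    intro t ht
    rw [Set.uIcc_of_le ham] at ht
    have htz : 0 ≤ t - z := by linarith [ht.1]
    have d1 : HasDerivAt (fun t : ℝ => (t - z) ^ (α + 2)) ((α + 2) * (t - z) ^ (α + 1)) t := by
      have douter := Real.hasDerivAt_rpow_const (x := t - z) (p := α + 2)
        (Or.inr (by linarith))
      have dinner : HasDerivAt (fun t : ℝ => t - z) 1 t := (hasDerivAt_id t).sub_const z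
      have := douter.comp t dinner
      simpa [Function.comp_def, show α + 2 - 1 = α + 1 by ring] using this
    have d2 : HasDerivAt (fun t : ℝ => (t - z) ^ (α + 1)) ((α + 1) * (t - z) ^ α) t := by
      have douter := Real.hasDerivAt_rpow_const (x := t - z) (p := α + 1)
        (Or.inr (by linarith))
      have dinner : HasDerivAt (fun t : ℝ => t - z) 1 t := (hasDerivAt_id t).sub_const z
      have := douter.comp t dinner
      simpa [Function.comp_def, show α + 1 - 1 = α by ring] using this
    have dF := (d1.div_const (α + 2)).sub (((d2.div_const (α + 1))).const_mul (g - z))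
    have heq : (α + 2) * (t - z) ^ (α + 1) / (α + 2)
        - (g - z) * ((α + 1) * (t - z) ^ α / (α + 1)) = (t - g) * (t - z) ^ α := by
      rw [hpow1 _ htz]
      field_simp
      ring
    rw [heq] at dF
    exact dF
  have hcontf : Continuous (fun t : ℝ => (t - g) * (t - z) ^ α) := by
    apply (continuous_id.sub continuous_const).mul
    exact ((continuous_id.sub continuous_const).rpow_const (fun x => Or.inr hα.le))
  have hFTC : (∫ t in a..m, (t - g) * (t - z) ^ α) = F m - F a :=
    intervalIntegral.integral_eq_sub_of_hasDerivAt hderiv (hcontf.intervalIntegrable a m)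
  -- relate ∫ L with FTC integral
  have hLrel : (∫ t in a..m, L t) = s ^ α * (F m - F a) := by
    rw [← hFTC, ← intervalIntegral.integral_const_mul]
    apply intervalIntegral.integral_congr
    intro t ht
    rw [Set.uIcc_of_le ham] at ht
    have htz : 0 ≤ t - z := by linarith [ht.1]
    rw [hL]
    simp only
    rw [Real.mul_rpow hspos.le htz]
    ring
  -- final positivity
  have hFpos : 0 < F m - F a := by
    set A : ℝ := a - z with hA
    set B : ℝ := m - z with hB
    have hA0 : 0 ≤ A := by rw [hA]; linarith
    have hAB : A < B := by rw [hA, hB]; linarith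
    have hB0 : 0 < B := lt_of_le_of_lt hA0 hAB
    set X : ℝ := B ^ (α + 1) with hX
    set Y : ℝ := A ^ (α + 1) with hYd
    have hYX : Y < X := Real.rpow_lt_rpow hA0 hAB hα1
    have hY0 : 0 ≤ Y := Real.rpow_nonneg hA0 _
    have hgz0 : 0 ≤ g - z := by linarith
    have hkey : (α + 2) * (g - z) < (α + 1) * B := by
      have h1 : s * ((α + 2) * (g - z)) < s * ((α + 1) * B) := by
        have e1 : s * ((α + 2) * (g - z)) = (α + 2) * h0 := by
          linear_combination (α + 2) * key1
        have e2 : s * ((α + 1) * B) = (α + 1) * M := by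
          have key2 : s * (m - z) = M := by
            linear_combination hs3 + key1
          rw [hB]; linear_combination (α + 1) * key2
        rw [e1, e2]
        rw [div_mul_eq_mul_div, lt_div_iff₀ hα2] at hlt
        linarith
      exact lt_of_mul_lt_mul_left h1 hspos.le
    have hB2 : B ^ (α + 2) = X * B := hpow2 B hB0.le
    have hA2 : A ^ (α + 2) = Y * A := hpow2 A hA0
    have hFv : F m - F a = ((α + 1) * (X * B - Y * A) - (α + 2) * ((g - z) * (X - Y)))
        / ((α + 1) * (α + 2)) := by
      rw [hF]
      simp only
      rw [show m - z = B from rfl, show a - z = A from rfl, hB2, hA2, ← hX, ← hYd]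
      field_simp
      ring
    rw [hFv]
    apply div_pos _ (by positivity)
    have k1 : (α + 2) * (g - z) * (X - Y) < (α + 1) * B * (X - Y) :=
      mul_lt_mul_of_pos_right hkey (by linarith)
    have k2 : Y * A ≤ Y * B := mul_le_mul_of_nonneg_left hAB.le hY0
    nlinarith
  have hLpos : 0 < ∫ t in a..m, L t := by
    rw [hLrel]
    exact mul_pos (Real.rpow_pos_of_pos hspos α) hFpos
  rw [hsplit]
  have := hLsplit ▸ hLpos
  linarith

theorem stmt_7 (a b α : ℝ) (h : ℝ → ℝ) (hab : a < b) (hα : 0 < α)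
    (hconc : ConcaveOn ℝ (Set.Icc a b) h)
    (hnn : ∀ t ∈ Set.Icc a b, 0 ≤ h t)
    (hint : 0 < ∫ t in a..b, h t) :
    h ((∫ t in a..b, t * h t ^ α) / (∫ t in a..b, h t ^ α)) ≥
      ((α + 1) / (α + 2)) * sSup (h '' Set.Icc a b) := by
  have hα2 : (0:ℝ) < α + 2 := by linarith
  have hα1 : (0:ℝ) < α + 1 := by linarith
  set c : ℝ := (α + 1) / (α + 2) with hc
  have hcpos : 0 < c := div_pos hα1 hα2
  have hclt1 : c < 1 := by rw [hc, div_lt_one hα2]; linarith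
  set I : ℝ := ∫ t in a..b, h t ^ α with hI
  set T : ℝ := ∫ t in a..b, t * h t ^ α with hT
  have hIpos : 0 < I := pow_int_pos hab hα hconc hnn hint
  set g : ℝ := T / I with hg
  -- integrability facts
  have hIint : IntervalIntegrable (fun t => h t ^ α) volume a b := by
    have := key_integrable hab hα hconc hnn (fun _ => (1:ℝ)) continuous_const
    simpa using this
  have hTint : IntervalIntegrable (fun t => t * h t ^ α) volume a b :=
    key_integrable hab hα hconc hnn (fun t => t) continuous_id
  -- g ∈ [a, b]
  have haux : ∀ r : ℝ, (∫ t in a..b, (t - r) * h t ^ α) = T - r * I := by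
    intro r
    have e : (fun t => (t - r) * h t ^ α) = fun t => t * h t ^ α - r * h t ^ α := by
      ext t; ring
    rw [e, intervalIntegral.integral_sub hTint (hIint.const_mul r),
      intervalIntegral.integral_const_mul]
  have hga : a ≤ g := by
    have h1 : 0 ≤ ∫ t in a..b, (t - a) * h t ^ α := by
      apply intervalIntegral.integral_nonneg hab.le
      intro t ht
      exact mul_nonneg (by linarith [ht.1]) (Real.rpow_nonneg (hnn t ht) α)
    rw [haux a] at h1
    rw [hg, le_div_iff₀ hIpos]; linarith
  have hgb : g ≤ b := by
    have h1 : 0 ≤ ∫ t in a..b, (b - t) * h t ^ α := by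
      apply intervalIntegral.integral_nonneg hab.le
      intro t ht
      exact mul_nonneg (by linarith [ht.2]) (Real.rpow_nonneg (hnn t ht) α)
    have e : (fun t => (b - t) * h t ^ α) = fun t => -((t - b) * h t ^ α) := by
      ext t; ring
    rw [e, intervalIntegral.integral_neg, haux b] at h1
    rw [hg, div_le_iff₀ hIpos]; linarith
  have hgIcc : g ∈ Set.Icc a b := ⟨hga, hgb⟩
  have E0 : (∫ t in a..b, (t - g) * h t ^ α) = 0 := by
    rw [haux g, hg, div_mul_cancel₀ _ hIpos.ne', sub_self]
  -- main pointwise claim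
  have main : ∀ m ∈ Set.Icc a b, c * h m ≤ h g := by
    intro m hm
    by_contra hcon
    push_neg at hcon
    have hg0 : 0 ≤ h g := hnn g hgIcc
    have hmp : 0 < h m := by
      rcases le_or_gt (h m) 0 with hm0 | hmp
      · have : c * h m ≤ 0 := mul_nonpos_of_nonneg_of_nonpos hcpos.le hm0
        linarith
      · exact hmp
    rcases lt_trichotomy g m with hgm | hgm | hgm
    · have hpos := core_pos hab hα hconc hnn hga hm.2 hgm hmp (by rw [← hc]; linarith)
      rw [E0] at hpos
      exact lt_irrefl _ hpos
    · rw [hgm] at hcon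
      nlinarith
    · -- reflect
      have hmem : ∀ x ∈ Set.Icc a b, a + b - x ∈ Set.Icc a b := fun x hx =>
        ⟨by linarith [hx.2], by linarith [hx.1]⟩
      have hconc' : ConcaveOn ℝ (Set.Icc a b) (fun t => h (a + b - t)) := by
        refine ⟨convex_Icc a b, ?_⟩
        intro x hx y hy p q hp hq hpq
        have hcc := hconc.2 (hmem x hx) (hmem y hy) hp hq hpq
        simp only [smul_eq_mul] at hcc ⊢
        have e : a + b - (p * x + q * y) = p * (a + b - x) + q * (a + b - y) := by
          linear_combination (a + b) * hpq.symm
        rw [e]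
        exact hcc
      have hnn' : ∀ t ∈ Set.Icc a b, 0 ≤ h (a + b - t) := fun t ht => hnn _ (hmem t ht)
      have hm' : a + b - m ∈ Set.Icc a b := hmem m hm
      have erfl : ∀ x : ℝ, a + b - (a + b - x) = x := fun x => by ring
      have hpos := core_pos (h := fun t => h (a + b - t)) hab hα hconc' hnn'
        (g := a + b - g) (m := a + b - m)
        (by linarith) (by linarith [hm.1]) (by linarith)
        (by show (0:ℝ) < h (a + b - (a + b - m)); rw [erfl m]; exact hmp)
        (by show h (a + b - (a + b - g)) < (α + 1) / (α + 2) * h (a + b - (a + b - m))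
            rw [erfl m, erfl g, ← hc]; linarith)
      have trans : (∫ t in a..b, (t - (a + b - g)) * h (a + b - t) ^ α) = 0 := by
        have e : (fun t => (t - (a + b - g)) * h (a + b - t) ^ α)
            = (fun t => (fun u => (g - u) * h u ^ α) (a + b - t)) := by
          ext t
          simp only
          rw [show t - (a + b - g) = g - (a + b - t) from by ring]
        rw [e, intervalIntegral.integral_comp_sub_left (fun u => (g - u) * h u ^ α) (a + b),
          show a + b - b = a from by ring, show a + b - a = b from by ring]
        have e2 : (fun u => (g - u) * h u ^ α) = fun u => -((u - g) * h u ^ α) := by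
          ext u; ring
        rw [e2, intervalIntegral.integral_neg, E0, neg_zero]
      rw [trans] at hpos
      exact lt_irrefl _ hpos
  -- conclude via sSup
  rw [ge_iff_le]
  have hsup : sSup (h '' Set.Icc a b) ≤ h g / c := by
    apply Real.sSup_le
    · rintro x ⟨m, hm, rfl⟩
      rw [le_div_iff₀ hcpos]
      linarith [main m hm]
    · exact div_nonneg (hnn g hgIcc) hcpos.le
  calc c * sSup (h '' Set.Icc a b) ≤ c * (h g / c) := by
        exact mul_le_mul_of_nonneg_left hsup hcpos.le
    _ = h g := by field_simp
end

section
/- Let g:[γ,δ]→[0,∞) be g(t)=c(δ-t) with c>0, and let β>0 and α>β. For any non-negative concave function φ:[γ,δ]→[0,∞), the ratio (∫_γ^δ t φ(t)^{α-β} g(t)^β dt)/(∫_γ^δ φ(t)^{α-β} g(t)^β dt) is at most (∫_γ^δ t (t-γ)^{α-β} g(t)^β dt)/(∫_γ^δ (t-γ)^{α-β} g(t)^β dt). -/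
open MeasureTheory Set

set_option maxHeartbeats 2000000 in
theorem stmt_12 (γ δ c α β : ℝ) (φ : ℝ → ℝ) (hγδ : γ < δ) (hc : 0 < c)
    (hβ : 0 < β) (hαβ : β < α)
    (hφconc : ConcaveOn ℝ (Set.Icc γ δ) φ)
    (hφnn : ∀ t ∈ Set.Icc γ δ, 0 ≤ φ t)
    (hφint : 0 < ∫ t in γ..δ, φ t ^ (α - β) * (c * (δ - t)) ^ β) :
    (∫ t in γ..δ, t * (φ t ^ (α - β) * (c * (δ - t)) ^ β)) /
        (∫ t in γ..δ, φ t ^ (α - β) * (c * (δ - t)) ^ β) ≤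
      (∫ t in γ..δ, t * ((t - γ) ^ (α - β) * (c * (δ - t)) ^ β)) /
        (∫ t in γ..δ, (t - γ) ^ (α - β) * (c * (δ - t)) ^ β) := by
  have hp0 : 0 < α - β := by linarith
  set p := α - β with hpdef
  set w : ℝ → ℝ := fun t => (c * (δ - t)) ^ β with hw
  set F : ℝ → ℝ := fun t => φ t ^ p * w t with hF
  set K : ℝ → ℝ := fun t => (t - γ) ^ p * w t with hK
  set μ : Measure ℝ := volume.restrict (Set.Ioc γ δ) with hμ
  haveI : Fact ((volume : Measure ℝ) (Set.Ioc γ δ) < ⊤) := ⟨measure_Ioc_lt_top⟩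
  -- boundedness of φ
  set m : ℝ := (γ + δ) / 2 with hm
  have hmmem : m ∈ Set.Icc γ δ := ⟨by simp [hm]; linarith, by simp [hm]; linarith⟩
  set M : ℝ := 2 * φ m with hM
  have hMnn : 0 ≤ M := by have := hφnn m hmmem; simp [hM]; linarith
  have hφle : ∀ t ∈ Set.Icc γ δ, φ t ≤ M := by
    intro t ht
    rcases le_total t m with h | h
    · -- m = a • t + b • δ
      have hδt : 0 < δ - t := by simp [hm] at h; linarith
      have key := hφconc.2 ht (right_mem_Icc.2 hγδ.le)
        (show (0:ℝ) ≤ (δ - m) / (δ - t) from div_nonneg (by simp only [hm]; linarith) (by linarith))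
        (show (0:ℝ) ≤ (m - t) / (δ - t) from div_nonneg (by linarith) (by linarith))
        (show (δ - m) / (δ - t) + (m - t) / (δ - t) = 1 by field_simp; ring)
      have hcomb : (δ - m) / (δ - t) * t + (m - t) / (δ - t) * δ = m := by
        field_simp; ring
      simp only [smul_eq_mul, hcomb] at key
      have h1 : (1 : ℝ) / 2 ≤ (δ - m) / (δ - t) := by
        rw [div_le_div_iff₀ (by norm_num) hδt]
        simp [hm] at ht ⊢; nlinarith [ht.1]
      have h2 : 0 ≤ (m - t) / (δ - t) * φ δ := by
        apply mul_nonneg (by apply div_nonneg; linarith; linarith)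
          (hφnn δ (right_mem_Icc.2 hγδ.le))
      have h3 : 0 ≤ φ t := hφnn t ht
      nlinarith [key, mul_le_mul_of_nonneg_right h1 h3]
    · have htγ : 0 < t - γ := by simp [hm] at h; linarith
      have key := hφconc.2 (left_mem_Icc.2 hγδ.le) ht
        (show (0:ℝ) ≤ (t - m) / (t - γ) from div_nonneg (by linarith) (by linarith))
        (show (0:ℝ) ≤ (m - γ) / (t - γ) from div_nonneg (by simp only [hm]; linarith) (by linarith))
        (show (t - m) / (t - γ) + (m - γ) / (t - γ) = 1 by field_simp; ring)
      have hcomb : (t - m) / (t - γ) * γ + (m - γ) / (t - γ) * t = m := by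
        field_simp; ring
      simp only [smul_eq_mul, hcomb] at key
      have h1 : (1 : ℝ) / 2 ≤ (m - γ) / (t - γ) := by
        rw [div_le_div_iff₀ (by norm_num) htγ]
        simp [hm] at ht ⊢; nlinarith [ht.2]
      have h2 : 0 ≤ (t - m) / (t - γ) * φ γ := by
        apply mul_nonneg (by apply div_nonneg; linarith; linarith)
          (hφnn γ (left_mem_Icc.2 hγδ.le))
      have h3 : 0 ≤ φ t := hφnn t ht
      nlinarith [key, mul_le_mul_of_nonneg_right h1 h3]
  -- continuity facts
  have hrpcont : ∀ q : ℝ, 0 < q → Continuous fun x : ℝ => x ^ q := by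
    intro q hq
    exact continuous_iff_continuousAt.2 fun x =>
      Real.continuousAt_rpow_const x q (Or.inr hq.le)
  have hwcont : Continuous w := by
    exact (hrpcont β hβ).comp (by continuity)
  have hKcont : Continuous K :=
    ((hrpcont p hp0).comp (by continuity)).mul hwcont
  have hφcontIoo : ContinuousOn φ (Set.Ioo γ δ) := by
    have h1 : ConvexOn ℝ (Set.Ioo γ δ) (-φ) :=
      (hφconc.subset Set.Ioo_subset_Icc_self (convex_Ioo γ δ)).neg
    have h2 := h1.continuousOn isOpen_Ioo
    have : ContinuousOn (-(-φ)) (Set.Ioo γ δ) := h2.neg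
    simpa using this
  have haeφ : AEMeasurable φ μ := by
    rw [hμ, ← Measure.restrict_congr_set Ioo_ae_eq_Ioc]
    exact (hφcontIoo.aemeasurable measurableSet_Ioo)
  have haeF : AEMeasurable F μ :=
    ((hrpcont p hp0).measurable.comp_aemeasurable haeφ).mul hwcont.aemeasurable
  -- a.e. membership
  have haemem : ∀ᵐ t ∂μ, t ∈ Set.Ioc γ δ := ae_restrict_mem measurableSet_Ioc
  have hwnn : ∀ t, γ < t → t ≤ δ → 0 ≤ w t := fun t h1 h2 =>
    Real.rpow_nonneg (by nlinarith) β
  have hwle : ∀ t, γ < t → t ≤ δ → w t ≤ (c * (δ - γ)) ^ β := fun t h1 h2 =>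
    Real.rpow_le_rpow (by nlinarith) (by nlinarith) hβ.le
  have hFnn : ∀ t, γ < t → t ≤ δ → 0 ≤ F t := fun t h1 h2 =>
    mul_nonneg (Real.rpow_nonneg (hφnn t ⟨h1.le, h2⟩) p) (hwnn t h1 h2)
  have boundF : ∀ᵐ t ∂μ, ‖F t‖ ≤ M ^ p * (c * (δ - γ)) ^ β := by
    filter_upwards [haemem] with t ht
    rw [Real.norm_eq_abs, abs_of_nonneg (hFnn t ht.1 ht.2)]
    exact mul_le_mul (Real.rpow_le_rpow (hφnn t ⟨ht.1.le, ht.2⟩)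
      (hφle t ⟨ht.1.le, ht.2⟩) hp0.le) (hwle t ht.1 ht.2)
      (hwnn t ht.1 ht.2) (Real.rpow_nonneg hMnn p)
  have hFint : Integrable F μ :=
    Integrable.mono' (integrable_const _) haeF.aestronglyMeasurable boundF
  have htFint : Integrable (fun t => t * F t) μ := by
    refine Integrable.mono' (integrable_const ((|γ| + |δ|) * (M ^ p * (c * (δ - γ)) ^ β)))
      (aemeasurable_id.mul haeF).aestronglyMeasurable ?_
    filter_upwards [boundF, haemem] with t hb ht
    rw [Real.norm_eq_abs, abs_mul]
    have h1 : |t| ≤ |γ| + |δ| := by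
      rw [abs_le]; constructor
      · have := neg_abs_le γ; have := abs_nonneg δ; linarith [ht.1]
      · have := le_abs_self δ; have := abs_nonneg γ; linarith [ht.2]
    exact mul_le_mul h1 (by simpa using hb) (abs_nonneg _) (by positivity)
  have hKint : Integrable K μ := hKcont.integrableOn_Ioc
  have htKint : Integrable (fun t => t * K t) μ :=
    (continuous_id.mul hKcont).integrableOn_Ioc
  -- key pointwise inequality
  have key : ∀ s ∈ Set.Ioc γ δ, ∀ t ∈ Set.Ioc γ δ, s ≤ t → F t * K s ≤ F s * K t := by
    intro s hs t ht hst
    have htγ : 0 < t - γ := by linarith [hs.1]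
    have core : φ t * (s - γ) ≤ φ s * (t - γ) := by
      have hc2 := hφconc.2 (left_mem_Icc.2 hγδ.le) (⟨(by linarith [hs.1] : γ ≤ t), ht.2⟩)
        (show (0:ℝ) ≤ (t - s) / (t - γ) from div_nonneg (by linarith) (by linarith))
        (show (0:ℝ) ≤ (s - γ) / (t - γ) from div_nonneg (by linarith [hs.1]) (by linarith))
        (show (t - s) / (t - γ) + (s - γ) / (t - γ) = 1 by field_simp; ring)
      have hcomb : (t - s) / (t - γ) * γ + (s - γ) / (t - γ) * t = s := by
        field_simp; ring
      simp only [smul_eq_mul, hcomb] at hc2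
      have h1 : 0 ≤ (t - s) / (t - γ) * φ γ :=
        mul_nonneg (by apply div_nonneg; linarith; linarith)
          (hφnn γ (left_mem_Icc.2 hγδ.le))
      have h2 : (s - γ) / (t - γ) * φ t * (t - γ) = φ t * (s - γ) := by
        field_simp
      have h4 : (s - γ) / (t - γ) * φ t ≤ φ s := by linarith
      have h5 := mul_le_mul_of_nonneg_right h4 htγ.le
      linarith
    have hX : φ t ^ p * (s - γ) ^ p ≤ φ s ^ p * (t - γ) ^ p := by
      rw [← Real.mul_rpow (hφnn t ⟨by linarith [hs.1], ht.2⟩) (by linarith [hs.1]),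
        ← Real.mul_rpow (hφnn s ⟨hs.1.le, hs.2⟩) (by linarith)]
      exact Real.rpow_le_rpow
        (mul_nonneg (hφnn t ⟨by linarith [hs.1], ht.2⟩) (by linarith [hs.1])) core hp0.le
    have hws : 0 ≤ w s := hwnn s hs.1 hs.2
    have hwt : 0 ≤ w t := hwnn t ht.1 ht.2
    calc F t * K s = φ t ^ p * (s - γ) ^ p * (w s * w t) := by simp only [hF, hK]; ring
      _ ≤ φ s ^ p * (t - γ) ^ p * (w s * w t) := by
          exact mul_le_mul_of_nonneg_right hX (mul_nonneg hws hwt)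
      _ = F s * K t := by simp only [hF, hK]; ring
  -- double integral
  set A : ℝ := ∫ t, F t ∂μ with hA
  set B : ℝ := ∫ t, t * F t ∂μ with hB
  set C : ℝ := ∫ t, K t ∂μ with hC
  set D : ℝ := ∫ t, t * K t ∂μ with hD
  have hGnn : 0 ≤ᵐ[μ.prod μ]
      fun q : ℝ × ℝ => (q.2 - q.1) * (F q.1 * K q.2 - F q.2 * K q.1) := by
    rw [hμ, Measure.prod_restrict]
    filter_upwards [ae_restrict_mem (measurableSet_Ioc.prod measurableSet_Ioc)] with q hq
    obtain ⟨hq1, hq2⟩ := hq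
    rcases le_total q.1 q.2 with h | h
    · exact mul_nonneg (by linarith) (by linarith [key q.1 hq1 q.2 hq2 h])
    · have hk := key q.2 hq2 q.1 hq1 h
      have h0 := mul_nonneg (sub_nonneg.2 h) (sub_nonneg.2 hk)
      have he : (q.2 - q.1) * (F q.1 * K q.2 - F q.2 * K q.1)
          = (q.1 - q.2) * (F q.2 * K q.1 - F q.1 * K q.2) := by ring
      simp only [Pi.zero_apply]
      linarith
  have hint1 : Integrable (fun q : ℝ × ℝ => F q.1 * (q.2 * K q.2)) (μ.prod μ) :=
    hFint.mul_prod htKint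
  have hint2 : Integrable (fun q : ℝ × ℝ => K q.1 * (q.2 * F q.2)) (μ.prod μ) :=
    hKint.mul_prod htFint
  have hint3 : Integrable (fun q : ℝ × ℝ => (q.1 * F q.1) * K q.2) (μ.prod μ) :=
    htFint.mul_prod hKint
  have hint4 : Integrable (fun q : ℝ × ℝ => (q.1 * K q.1) * F q.2) (μ.prod μ) :=
    htKint.mul_prod hFint
  have hGint : (∫ q : ℝ × ℝ, (q.2 - q.1) * (F q.1 * K q.2 - F q.2 * K q.1) ∂(μ.prod μ))
      = A * D - C * B - B * C + D * A := by
    have heq : (fun q : ℝ × ℝ => (q.2 - q.1) * (F q.1 * K q.2 - F q.2 * K q.1))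
        = fun q : ℝ × ℝ => F q.1 * (q.2 * K q.2) - K q.1 * (q.2 * F q.2)
          - (q.1 * F q.1) * K q.2 + (q.1 * K q.1) * F q.2 := by
      funext q; ring
    have step1 : (∫ q : ℝ × ℝ, (F q.1 * (q.2 * K q.2) - K q.1 * (q.2 * F q.2)
          - (q.1 * F q.1) * K q.2 + (q.1 * K q.1) * F q.2) ∂(μ.prod μ))
        = (∫ q : ℝ × ℝ, (F q.1 * (q.2 * K q.2) - K q.1 * (q.2 * F q.2)
            - (q.1 * F q.1) * K q.2) ∂(μ.prod μ))
          + ∫ q : ℝ × ℝ, (q.1 * K q.1) * F q.2 ∂(μ.prod μ) :=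
      integral_add ((hint1.sub hint2).sub hint3) hint4
    have step2 : (∫ q : ℝ × ℝ, (F q.1 * (q.2 * K q.2) - K q.1 * (q.2 * F q.2)
          - (q.1 * F q.1) * K q.2) ∂(μ.prod μ))
        = (∫ q : ℝ × ℝ, (F q.1 * (q.2 * K q.2) - K q.1 * (q.2 * F q.2)) ∂(μ.prod μ))
          - ∫ q : ℝ × ℝ, (q.1 * F q.1) * K q.2 ∂(μ.prod μ) :=
      integral_sub (hint1.sub hint2) hint3
    have step3 : (∫ q : ℝ × ℝ, (F q.1 * (q.2 * K q.2) - K q.1 * (q.2 * F q.2)) ∂(μ.prod μ))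
        = (∫ q : ℝ × ℝ, F q.1 * (q.2 * K q.2) ∂(μ.prod μ))
          - ∫ q : ℝ × ℝ, K q.1 * (q.2 * F q.2) ∂(μ.prod μ) :=
      integral_sub hint1 hint2
    have i1 : (∫ q : ℝ × ℝ, F q.1 * (q.2 * K q.2) ∂(μ.prod μ)) = A * D :=
      integral_prod_mul F (fun t => t * K t)
    have i2 : (∫ q : ℝ × ℝ, K q.1 * (q.2 * F q.2) ∂(μ.prod μ)) = C * B :=
      integral_prod_mul K (fun t => t * F t)
    have i3 : (∫ q : ℝ × ℝ, (q.1 * F q.1) * K q.2 ∂(μ.prod μ)) = B * C :=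
      integral_prod_mul (fun t => t * F t) K
    have i4 : (∫ q : ℝ × ℝ, (q.1 * K q.1) * F q.2 ∂(μ.prod μ)) = D * A :=
      integral_prod_mul (fun t => t * K t) F
    rw [heq, step1, step2, step3, i1, i2, i3, i4]
  have hBC : B * C ≤ A * D := by
    have h0 := integral_nonneg_of_ae hGnn
    rw [hGint] at h0
    linarith
  -- positivity of C
  have hCpos : 0 < C := by
    rw [hC, hμ, ← intervalIntegral.integral_of_le hγδ.le]
    apply intervalIntegral.intervalIntegral_pos_of_pos_on (hKcont.intervalIntegrable γ δ) _ hγδ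
    intro x hx
    exact mul_pos (Real.rpow_pos_of_pos (by linarith [hx.1]) p)
      (Real.rpow_pos_of_pos (by nlinarith [hx.2]) β)
  have hApos : 0 < A := by
    rw [intervalIntegral.integral_of_le hγδ.le] at hφint
    exact hφint
  -- finish
  rw [intervalIntegral.integral_of_le hγδ.le, intervalIntegral.integral_of_le hγδ.le,
    intervalIntegral.integral_of_le hγδ.le, intervalIntegral.integral_of_le hγδ.le]
  rw [div_le_div_iff₀ hApos hCpos]
  calc (∫ t in Set.Ioc γ δ, t * (φ t ^ p * (c * (δ - t)) ^ β)) * C = B * C := by rw [hB]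
    _ ≤ A * D := hBC
    _ = (∫ t in Set.Ioc γ δ, t * ((t - γ) ^ p * (c * (δ - t)) ^ β)) * A := by
        rw [hD]; ring
end

section
/- Let h:[0,b]→[0,∞) be concave with positive integral, β>0, and fix x₁∈(0,b). Then there exist γ<δ and c>0 with 0≤γ≤x₁≤b≤δ such that the function g(t)=c(δ-t) satisfies g(x₁)=h(x₁), ∫_γ^δ g(t)^β dt = ∫_0^b h(t)^β dt, and ∫_{x₁}^δ g(t)^β dt = ∫_{x₁}^b h(t)^β dt. -/
open MeasureTheory intervalIntegral Set

/-- The basic computation: the integral of a decreasing nonnegative affine power. -/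
lemma affine_rpow_int {β : ℝ} (hβ : 0 < β) (c d u : ℝ) (hc : 0 ≤ c) (hu : u ≤ d) :
    ∫ t in u..d, (c * (d - t)) ^ β = c ^ β * (d - u) ^ (β + 1) / (β + 1) := by
  have h1 : (∫ t in u..d, (c * (d - t)) ^ β) = ∫ s in (0 : ℝ)..(d - u), (c * s) ^ β := by
    simpa using intervalIntegral.integral_comp_sub_left (a := u) (b := d)
      (fun s => (c * s) ^ β) d
  rw [h1]
  have h2 : (∫ s in (0 : ℝ)..(d - u), (c * s) ^ β)
      = ∫ s in (0 : ℝ)..(d - u), c ^ β * s ^ β := by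
    apply intervalIntegral.integral_congr
    intro s hs
    rw [Set.uIcc_of_le (by linarith)] at hs
    exact Real.mul_rpow hc hs.1
  rw [h2, intervalIntegral.integral_const_mul, integral_rpow (Or.inl (by linarith))]
  rw [Real.zero_rpow (by linarith : β + 1 ≠ 0)]
  ring

set_option maxHeartbeats 1000000 in
theorem stmt_16 (b β x₁ : ℝ) (h : ℝ → ℝ) (hb : 0 < b) (hβ : 0 < β)
    (hx₁ : x₁ ∈ Set.Ioo 0 b)
    (hconc : ConcaveOn ℝ (Set.Icc 0 b) h)
    (hnn : ∀ t ∈ Set.Icc (0 : ℝ) b, 0 ≤ h t)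
    (hsupp : ∀ t ∈ Set.Ioo (0 : ℝ) b, 0 < h t)
    (hint : 0 < ∫ t in (0 : ℝ)..b, h t) :
    ∃ γ δ c : ℝ, γ < δ ∧ 0 < c ∧ 0 ≤ γ ∧ γ ≤ x₁ ∧ x₁ ≤ b ∧ b ≤ δ ∧
      c * (δ - x₁) = h x₁ ∧
      (∫ t in γ..δ, (c * (δ - t)) ^ β) = (∫ t in (0 : ℝ)..b, h t ^ β) ∧
      (∫ t in x₁..δ, (c * (δ - t)) ^ β) = (∫ t in x₁..b, h t ^ β) := by
  obtain ⟨hx0, hxb⟩ := hx₁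
  have hbx : 0 < b - x₁ := by linarith
  set H1 := h x₁ with hH1def
  clear_value H1
  have hH1 : 0 < H1 := by rw [hH1def]; exact hsupp x₁ ⟨hx0, hxb⟩
  have hH1β : 0 < H1 ^ β := Real.rpow_pos_of_pos hH1 β
  have hβ1 : 0 < β + 1 := by linarith
  -- continuity of h on the interior
  have hcontOn : ContinuousOn h (Set.Ioo 0 b) := by
    have := hconc.continuousOn_interior
    rwa [interior_Icc] at this
  -- uniform bound on h
  set M := H1 * b / (b - x₁) + H1 * b / x₁ with hMdef
  clear_value M
  have hM : ∀ t ∈ Set.Icc (0 : ℝ) b, h t ≤ M := by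
    intro t ht
    rcases le_total t x₁ with hc1 | hc1
    · have hbt : 0 < b - t := by linarith
      have hpt : (b - x₁) / (b - t) * t + (x₁ - t) / (b - t) * b = x₁ := by
        field_simp
        ring
      have ha1 : (0:ℝ) ≤ (b - x₁) / (b - t) := div_nonneg (by linarith) hbt.le
      have ha2 : (0:ℝ) ≤ (x₁ - t) / (b - t) := div_nonneg (by linarith) hbt.le
      have ha3 : (b - x₁) / (b - t) + (x₁ - t) / (b - t) = 1 := by field_simp; ring
      have hcon := hconc.2 ht (⟨hb.le, le_refl b⟩ : b ∈ Set.Icc 0 b) ha1 ha2 ha3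
      rw [smul_eq_mul, smul_eq_mul, smul_eq_mul, smul_eq_mul, hpt] at hcon
      have hb0 : 0 ≤ h b := hnn b ⟨hb.le, le_refl b⟩
      have h2 : 0 ≤ (x₁ - t) / (b - t) * h b :=
        mul_nonneg (div_nonneg (by linarith) hbt.le) hb0
      have step : (b - x₁) / (b - t) * h t ≤ H1 := by linarith
      rw [div_mul_eq_mul_div, div_le_iff₀ hbt] at step
      have hht : 0 ≤ h t := hnn t ht
      have h3 : h t ≤ H1 * b / (b - x₁) := by
        rw [le_div_iff₀ hbx]
        nlinarith [mul_nonneg hH1.le ht.1]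
      have h4 : 0 ≤ H1 * b / x₁ := by positivity
      rw [hMdef]
      linarith
    · have ht0 : 0 < t := lt_of_lt_of_le hx0 hc1
      have hpt : (x₁ / t) * t + ((t - x₁) / t) * (0:ℝ) = x₁ := by
        field_simp
        ring
      have ha1 : (0:ℝ) ≤ x₁ / t := div_nonneg hx0.le ht0.le
      have ha2 : (0:ℝ) ≤ (t - x₁) / t := div_nonneg (by linarith) ht0.le
      have ha3 : x₁ / t + (t - x₁) / t = 1 := by field_simp; ring
      have hcon := hconc.2 ht (⟨le_refl (0:ℝ), hb.le⟩ : (0:ℝ) ∈ Set.Icc 0 b) ha1 ha2 ha3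
      rw [smul_eq_mul, smul_eq_mul, smul_eq_mul, smul_eq_mul, hpt] at hcon
      have h0b : 0 ≤ h 0 := hnn 0 ⟨le_refl _, hb.le⟩
      have h2 : 0 ≤ (t - x₁) / t * h 0 :=
        mul_nonneg (div_nonneg (by linarith) ht0.le) h0b
      have step : x₁ / t * h t ≤ H1 := by linarith
      rw [div_mul_eq_mul_div, div_le_iff₀ ht0] at step
      have hht : 0 ≤ h t := hnn t ht
      have h3 : h t ≤ H1 * b / x₁ := by
        rw [le_div_iff₀ hx0]
        nlinarith [mul_nonneg hH1.le (by linarith [ht.2] : (0:ℝ) ≤ b - t)]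
      have h4 : 0 ≤ H1 * b / (b - x₁) := by positivity
      rw [hMdef]
      linarith
  -- integrability of h^β on subintervals
  have hInt : ∀ u v : ℝ, 0 ≤ u → u ≤ v → v ≤ b →
      IntervalIntegrable (fun t => h t ^ β) volume u v := by
    intro u v hu huv hvb
    rw [intervalIntegrable_iff_integrableOn_Ioc_of_le huv,
      integrableOn_Ioc_iff_integrableOn_Ioo]
    have hsub : Set.Ioo u v ⊆ Set.Ioo 0 b := Set.Ioo_subset_Ioo hu hvb
    have hcm : ContinuousOn (fun t => h t ^ β) (Set.Ioo u v) :=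
      (hcontOn.mono hsub).rpow_const (fun x _ => Or.inr hβ.le)
    refine Integrable.mono' (g := fun _ => M ^ β)
      (integrableOn_const (hs := measure_Ioo_lt_top.ne) (hC := enorm_ne_top))
      (hcm.aestronglyMeasurable measurableSet_Ioo) ?_
    rw [ae_restrict_iff' measurableSet_Ioo]
    filter_upwards with t ht
    have h1 : t ∈ Set.Icc (0:ℝ) b := ⟨(hsub ht).1.le, (hsub ht).2.le⟩
    have hh1 := hnn t h1
    rw [Real.norm_eq_abs, abs_of_nonneg (Real.rpow_nonneg hh1 β)]
    exact Real.rpow_le_rpow hh1 (hM t h1) hβ.le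
  set A := ∫ t in x₁..b, h t ^ β with hAdef
  clear_value A
  set T := ∫ t in (0:ℝ)..b, h t ^ β with hTdef
  clear_value T
  -- lower bound for h on [x₁, b]
  have hlow : ∀ t ∈ Set.Icc x₁ b, H1 / (b - x₁) * (b - t) ≤ h t := by
    intro t ht
    have hpt : (b - t) / (b - x₁) * x₁ + (t - x₁) / (b - x₁) * b = t := by
      field_simp
      ring
    have ha1 : (0:ℝ) ≤ (b - t) / (b - x₁) := div_nonneg (by linarith [ht.2]) hbx.le
    have ha2 : (0:ℝ) ≤ (t - x₁) / (b - x₁) := div_nonneg (by linarith [ht.1]) hbx.le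
    have ha3 : (b - t) / (b - x₁) + (t - x₁) / (b - x₁) = 1 := by field_simp; ring
    have hcon := hconc.2 (⟨hx0.le, hxb.le⟩ : x₁ ∈ Set.Icc 0 b)
      (⟨hb.le, le_refl b⟩ : b ∈ Set.Icc 0 b) ha1 ha2 ha3
    rw [smul_eq_mul, smul_eq_mul, smul_eq_mul, smul_eq_mul, hpt] at hcon
    have hb0 : 0 ≤ h b := hnn b ⟨hb.le, le_refl b⟩
    have h2 : 0 ≤ (t - x₁) / (b - x₁) * h b :=
      mul_nonneg (div_nonneg (by linarith [ht.1]) hbx.le) hb0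
    have : (b - t) / (b - x₁) * h x₁ = H1 / (b - x₁) * (b - t) := by
      rw [hH1def]; ring
    linarith [hcon, h2, this.le, this.ge]
  -- lower bound for A
  have hAlow : H1 ^ β * (b - x₁) / (β + 1) ≤ A := by
    have hc' : (0:ℝ) ≤ H1 / (b - x₁) := by positivity
    have haff := affine_rpow_int hβ (H1 / (b - x₁)) b x₁ hc' hxb.le
    have hlowβcont : Continuous fun t => (H1 / (b - x₁) * (b - t)) ^ β :=
      (continuous_const.mul (continuous_const.sub continuous_id)).rpow_const
        (fun x => Or.inr hβ.le)
    have hmono : (∫ t in x₁..b, (H1 / (b - x₁) * (b - t)) ^ β) ≤ A := by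
      rw [hAdef]
      apply intervalIntegral.integral_mono_on hxb.le (hlowβcont.intervalIntegrable x₁ b)
        (hInt x₁ b hx0.le hxb.le (le_refl b))
      intro t ht
      have h1 : (0:ℝ) ≤ H1 / (b - x₁) * (b - t) :=
        mul_nonneg hc' (by linarith [ht.2])
      exact Real.rpow_le_rpow h1 (hlow t ht) hβ.le
    have e1 : (H1 / (b - x₁)) ^ β * (b - x₁) ^ (β + 1) = H1 ^ β * (b - x₁) := by
      rw [Real.rpow_add hbx, Real.rpow_one, ← mul_assoc,
        ← Real.mul_rpow hc' hbx.le, div_mul_cancel₀ _ hbx.ne']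
    rw [haff, e1] at hmono
    exact hmono
  have hApos : 0 < A := lt_of_lt_of_le (by positivity) hAlow
  -- define δ and c
  set δ := x₁ + (β + 1) * A / H1 ^ β with hδdef
  clear_value δ
  have hδx : 0 < δ - x₁ := by
    have : 0 < (β + 1) * A / H1 ^ β := div_pos (mul_pos hβ1 hApos) hH1β
    simp only [hδdef]; linarith
  have hbδ : b ≤ δ := by
    have h1 : b - x₁ ≤ (β + 1) * A / H1 ^ β := by
      rw [le_div_iff₀ hH1β]
      have := hAlow
      rw [div_le_iff₀ hβ1] at this
      linarith [this]
    simp only [hδdef]; linarith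
  set c := H1 / (δ - x₁) with hcdef
  clear_value c
  have hc : 0 < c := by rw [hcdef]; positivity
  have hgx1eq : c * (δ - x₁) = H1 := by rw [hcdef]; exact div_mul_cancel₀ _ hδx.ne'
  have hcβ : 0 < c ^ β := Real.rpow_pos_of_pos hc β
  -- ∫_{x₁}^δ g^β = A
  have hAval : c ^ β * (δ - x₁) ^ (β + 1) / (β + 1) = A := by
    have e1 : c ^ β * (δ - x₁) ^ (β + 1) = H1 ^ β * (δ - x₁) := by
      rw [Real.rpow_add hδx, Real.rpow_one, ← mul_assoc,
        ← Real.mul_rpow hc.le hδx.le, hgx1eq]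
    rw [e1]
    have : δ - x₁ = (β + 1) * A / H1 ^ β := by simp [hδdef]
    rw [this]
    field_simp
  have hAeq : (∫ t in x₁..δ, (c * (δ - t)) ^ β) = A := by
    rw [affine_rpow_int hβ c δ x₁ hc.le (by linarith), hAval]
  -- continuity of g^β
  have hgβcont : Continuous fun t => (c * (δ - t)) ^ β :=
    (continuous_const.mul (continuous_const.sub continuous_id)).rpow_const
      (fun x => Or.inr hβ.le)
  -- T = ∫_0^{x₁} h^β + A, and A ≤ T
  have hsplitT : T = (∫ t in (0:ℝ)..x₁, h t ^ β) + A := by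
    rw [hTdef, hAdef,
      intervalIntegral.integral_add_adjacent_intervals
        (hInt 0 x₁ (le_refl _) hx0.le hxb.le) (hInt x₁ b hx0.le hxb.le (le_refl b))]
  have h0x₁nn : 0 ≤ ∫ t in (0:ℝ)..x₁, h t ^ β := by
    apply intervalIntegral.integral_nonneg hx0.le
    intro u hu
    exact Real.rpow_nonneg (hnn u ⟨hu.1, le_trans hu.2 hxb.le⟩) β
  have hTA : A ≤ T := by linarith [hsplitT, h0x₁nn]
  have hTpos : 0 < T := lt_of_lt_of_le hApos hTA
  -- the key pointwise bound h ≤ g on [0, x₁]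
  have key : ∀ t ∈ Set.Icc (0:ℝ) x₁, h t ≤ c * (δ - t) := by
    intro t₀ ht₀
    by_contra hlt
    push_neg at hlt
    have ht₀x : t₀ < x₁ := by
      rcases lt_or_eq_of_le ht₀.2 with h1 | h1
      · exact h1
      · exfalso; rw [h1, hgx1eq, hH1def] at hlt; exact lt_irrefl _ hlt
    have hq : 0 < x₁ - t₀ := by linarith
    set K := (h t₀ - c * (δ - t₀)) / (x₁ - t₀) with hKdef
    clear_value K
    have hKpos : 0 < K := by
      rw [hKdef]
      exact div_pos (by linarith) hq
    have hKq : K * (x₁ - t₀) = h t₀ - c * (δ - t₀) := by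
      rw [hKdef]; exact div_mul_cancel₀ _ hq.ne'
    -- upper bound on [x₁, b]
    have hub : ∀ s ∈ Set.Icc x₁ b, h s ≤ c * (δ - s) - K * (s - x₁) := by
      intro s hs
      rcases eq_or_lt_of_le hs.1 with he | hlt'
      · rw [← he]
        simp [hgx1eq, hH1def]
      · have hp : 0 < s - x₁ := by linarith
        have hd : 0 < s - t₀ := by linarith
        have hmem₀ : t₀ ∈ Set.Icc (0:ℝ) b := ⟨ht₀.1, by linarith [ht₀.2]⟩
        have hmemS : s ∈ Set.Icc (0:ℝ) b := ⟨by linarith [hs.1], hs.2⟩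
        have hpt : (s - x₁) / (s - t₀) * t₀ + (x₁ - t₀) / (s - t₀) * s = x₁ := by
          field_simp
          ring
        have ha1 : (0:ℝ) ≤ (s - x₁) / (s - t₀) := div_nonneg hp.le hd.le
        have ha2 : (0:ℝ) ≤ (x₁ - t₀) / (s - t₀) := div_nonneg hq.le hd.le
        have ha3 : (s - x₁) / (s - t₀) + (x₁ - t₀) / (s - t₀) = 1 := by field_simp; ring
        have hcon := hconc.2 hmem₀ hmemS ha1 ha2 ha3
        rw [smul_eq_mul, smul_eq_mul, smul_eq_mul, smul_eq_mul, hpt] at hcon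
        rw [div_mul_eq_mul_div, div_mul_eq_mul_div, ← add_div,
          div_le_iff₀ hd] at hcon
        -- hcon : (s - x₁) * h t₀ + (x₁ - t₀) * h s ≤ h x₁ * (s - t₀)
        rw [show h x₁ = c * (δ - x₁) from (hgx1eq.trans hH1def).symm] at hcon
        have hKp : K * (s - x₁) * (x₁ - t₀) = (h t₀ - c * (δ - t₀)) * (s - x₁) := by
          rw [mul_right_comm, hKq]
        have hfinal : (x₁ - t₀) * h s ≤ (x₁ - t₀) * (c * (δ - s) - K * (s - x₁)) := by
          nlinarith [hcon, hKp]
        exact le_of_mul_le_mul_left hfinal hq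
    -- strict comparison of integrals
    have hmcont : Continuous fun s => (c * (δ - s) - K * (s - x₁)) ^ β :=
      ((continuous_const.mul (continuous_const.sub continuous_id)).sub
        (continuous_const.mul (continuous_id.sub continuous_const))).rpow_const
        (fun x => Or.inr hβ.le)
    have h1 : A ≤ ∫ s in x₁..b, (c * (δ - s) - K * (s - x₁)) ^ β := by
      rw [hAdef]
      apply intervalIntegral.integral_mono_on hxb.le
        (hInt x₁ b hx0.le hxb.le (le_refl b)) (hmcont.intervalIntegrable x₁ b)
      intro s hs
      exact Real.rpow_le_rpow (hnn s ⟨by linarith [hs.1], hs.2⟩) (hub s hs) hβ.le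
    have h2 : (∫ s in x₁..b, (c * (δ - s) - K * (s - x₁)) ^ β)
        < ∫ s in x₁..b, (c * (δ - s)) ^ β := by
      apply intervalIntegral.integral_lt_integral_of_continuousOn_of_le_of_exists_lt hxb
        hmcont.continuousOn hgβcont.continuousOn
      · intro s hs
        have hs' : s ∈ Set.Icc x₁ b := ⟨hs.1.le, hs.2⟩
        have hm0 : 0 ≤ c * (δ - s) - K * (s - x₁) :=
          le_trans (hnn s ⟨by linarith [hs'.1], hs'.2⟩) (hub s hs')
        apply Real.rpow_le_rpow hm0 _ hβ.le
        nlinarith [hKpos, hs.1]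
      · refine ⟨b, ⟨hxb.le, le_refl b⟩, ?_⟩
        have hm0 : 0 ≤ c * (δ - b) - K * (b - x₁) :=
          le_trans (hnn b ⟨hb.le, le_refl b⟩) (hub b ⟨hxb.le, le_refl b⟩)
        apply Real.rpow_lt_rpow hm0 _ hβ
        nlinarith [hKpos, hxb]
    have h3 : (∫ s in x₁..b, (c * (δ - s)) ^ β) ≤ ∫ s in x₁..δ, (c * (δ - s)) ^ β := by
      rw [← intervalIntegral.integral_add_adjacent_intervals
        (hgβcont.intervalIntegrable x₁ b) (hgβcont.intervalIntegrable b δ)]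
      have : 0 ≤ ∫ s in b..δ, (c * (δ - s)) ^ β := by
        apply intervalIntegral.integral_nonneg hbδ
        intro u hu
        exact Real.rpow_nonneg (by nlinarith [hc, hu.2] : (0:ℝ) ≤ c * (δ - u)) β
      linarith
    rw [hAeq] at h3
    linarith
  -- T ≤ ∫_0^δ g^β
  have hT0x : (∫ t in (0:ℝ)..x₁, h t ^ β) ≤ ∫ t in (0:ℝ)..x₁, (c * (δ - t)) ^ β := by
    apply intervalIntegral.integral_mono_on hx0.le
      (hInt 0 x₁ (le_refl _) hx0.le hxb.le) (hgβcont.intervalIntegrable 0 x₁)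
    intro t ht
    exact Real.rpow_le_rpow (hnn t ⟨ht.1, le_trans ht.2 hxb.le⟩) (key t ht) hβ.le
  have hδpos : 0 < δ := lt_of_lt_of_le hb hbδ
  have hTle : T ≤ c ^ β * δ ^ (β + 1) / (β + 1) := by
    have haffδ : (∫ t in (0:ℝ)..δ, (c * (δ - t)) ^ β)
        = c ^ β * (δ - 0) ^ (β + 1) / (β + 1) :=
      affine_rpow_int hβ c δ 0 hc.le hδpos.le
    rw [sub_zero] at haffδ
    have hsplitg : (∫ t in (0:ℝ)..δ, (c * (δ - t)) ^ β)
        = (∫ t in (0:ℝ)..x₁, (c * (δ - t)) ^ β) + ∫ t in x₁..δ, (c * (δ - t)) ^ β :=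
      (intervalIntegral.integral_add_adjacent_intervals
        (hgβcont.intervalIntegrable 0 x₁) (hgβcont.intervalIntegrable x₁ δ)).symm
    rw [hsplitg, hAeq] at haffδ
    linarith [hsplitT, hT0x]
  -- define γ
  set w := ((β + 1) * T / c ^ β) ^ (β + 1 : ℝ)⁻¹ with hwdef
  clear_value w
  have hbase : 0 < (β + 1) * T / c ^ β := div_pos (mul_pos hβ1 hTpos) hcβ
  have hwpos : 0 < w := by rw [hwdef]; exact Real.rpow_pos_of_pos hbase _
  have hwβ : w ^ (β + 1) = (β + 1) * T / c ^ β := by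
    rw [hwdef]; exact Real.rpow_inv_rpow hbase.le hβ1.ne'
  set γ := δ - w with hγdef
  clear_value γ
  have hγδ : γ < δ := by simp only [hγdef]; linarith
  -- ∫_γ^δ g^β = T
  have hTeq : (∫ t in γ..δ, (c * (δ - t)) ^ β) = T := by
    rw [affine_rpow_int hβ c δ γ hc.le hγδ.le]
    have : δ - γ = w := by simp [hγdef]
    rw [this, hwβ]
    field_simp
  -- γ ≤ x₁
  have hγx : γ ≤ x₁ := by
    have hwge : δ - x₁ ≤ w := by
      by_contra hcon
      push_neg at hcon
      have h1 : w ^ (β + 1) < (δ - x₁) ^ (β + 1) :=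
        Real.rpow_lt_rpow hwpos.le hcon hβ1
      rw [hwβ] at h1
      rw [div_lt_iff₀ hcβ] at h1
      have h2 : T < c ^ β * (δ - x₁) ^ (β + 1) / (β + 1) := by
        rw [lt_div_iff₀ hβ1]
        linarith
      rw [hAval] at h2
      linarith
    simp only [hγdef]; linarith
  -- 0 ≤ γ
  have hγ0 : 0 ≤ γ := by
    have hwle : w ≤ δ := by
      by_contra hcon
      push_neg at hcon
      have h1 : δ ^ (β + 1) < w ^ (β + 1) :=
        Real.rpow_lt_rpow hδpos.le hcon hβ1
      rw [hwβ] at h1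
      rw [lt_div_iff₀ hcβ] at h1
      have h2 : c ^ β * δ ^ (β + 1) / (β + 1) < T := by
        rw [div_lt_iff₀ hβ1]
        linarith
      linarith
    simp only [hγdef]; linarith
  exact ⟨γ, δ, c, hγδ, hc, hγ0, hγx, hxb.le, hbδ, hgx1eq, hTeq, hAeq⟩
end

section
/- Let h:[0,b]→[0,∞) be concave, positive on (0,b), β>0, and let g(t)=c(δ-t) on [γ,δ] (with 0≤γ<δ, b≤δ, c>0) satisfy g(x₁)=h(x₁) for some x₁∈(γ,b), ∫_γ^δ g^β = ∫_0^b h^β, and ∫_{x₁}^δ g^β = ∫_{x₁}^b h^β (extending h by 0 on [b,δ] and g by 0 on [0,γ]). Then for every s∈[0,δ], ∫_s^b h(t)^β dt ≤ ∫_s^δ g(t)^β dt. -/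
open MeasureTheory Set intervalIntegral

private lemma conc3 {φ : ℝ → ℝ} {A B : ℝ} (hφ : ConcaveOn ℝ (Set.Icc A B) φ)
    {u v w : ℝ} (hu : u ∈ Set.Icc A B) (hw : w ∈ Set.Icc A B)
    (h1 : u ≤ v) (h2 : v ≤ w) :
    (w - v) * φ u + (v - u) * φ w ≤ (w - u) * φ v := by
  rcases eq_or_lt_of_le (h1.trans h2) with he | hlt
  · have hvu : v = u := le_antisymm (he ▸ h2) h1
    subst hvu
    rw [← he]
    ring_nf
    exact le_refl _
  · have hd : 0 < w - u := sub_pos.2 hlt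
    have h0a : (0:ℝ) ≤ (w - v) / (w - u) := div_nonneg (by linarith) hd.le
    have h0b : (0:ℝ) ≤ (v - u) / (w - u) := div_nonneg (by linarith) hd.le
    have hab : (w - v) / (w - u) + (v - u) / (w - u) = 1 := by field_simp; ring
    have key := hφ.2 hu hw h0a h0b hab
    have hv : (w - v) / (w - u) * u + (v - u) / (w - u) * w = v := by
      field_simp; ring
    simp only [smul_eq_mul, hv] at key
    have := mul_le_mul_of_nonneg_left key hd.le
    have he2 : (w - u) * ((w - v) / (w - u) * φ u + (v - u) / (w - u) * φ w)
        = (w - v) * φ u + (v - u) * φ w := by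
      field_simp
    linarith [he2 ▸ this]

theorem stmt_17 (b β γ δ c x₁ : ℝ) (h : ℝ → ℝ) (hb : 0 < b) (hβ : 0 < β)
    (hγ : 0 ≤ γ) (hγδ : γ < δ) (hbδ : b ≤ δ) (hc : 0 < c)
    (hx₁ : γ < x₁) (hx₁b : x₁ < b)
    (hconc : ConcaveOn ℝ (Set.Icc 0 b) h)
    (hnn : ∀ t ∈ Set.Icc (0 : ℝ) b, 0 ≤ h t)
    (hsupp : ∀ t ∈ Set.Ioo (0 : ℝ) b, 0 < h t)
    (hcross : c * (δ - x₁) = h x₁)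
    (htotal : (∫ t in γ..δ, (c * (δ - t)) ^ β) = ∫ t in (0 : ℝ)..b, h t ^ β)
    (htail : (∫ t in x₁..δ, (c * (δ - t)) ^ β) = ∫ t in x₁..b, h t ^ β) :
    ∀ s ∈ Set.Icc (0 : ℝ) δ,
      (∫ t in s..δ, (if b < t then (0 : ℝ) else h t) ^ β) ≤
        (∫ t in s..δ, (if t < γ then (0 : ℝ) else c * (δ - t)) ^ β) := by
  have hβ' : β ≠ 0 := hβ.ne'
  have h0δ : (0:ℝ) ≤ δ := le_trans hb.le hbδ
  set G : ℝ → ℝ := fun t => (if t < γ then (0:ℝ) else c * (δ - t)) ^ β with hGdef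
  set H : ℝ → ℝ := fun t => (if b < t then (0:ℝ) else h t) ^ β with hHdef
  -- pointwise values
  have hgnn : ∀ t : ℝ, t ≤ δ → 0 ≤ c * (δ - t) := fun t ht => by nlinarith
  have hGval : ∀ t : ℝ, γ ≤ t → G t = (c * (δ - t)) ^ β := by
    intro t ht; simp only [hGdef, if_neg (not_lt.2 ht)]
  have hG0 : ∀ t : ℝ, t < γ → G t = 0 := by
    intro t ht; simp only [hGdef, if_pos ht, Real.zero_rpow hβ']
  have hGnn : ∀ t : ℝ, t ≤ δ → 0 ≤ G t := by
    intro t ht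
    by_cases hlt : t < γ
    · rw [hG0 t hlt]
    · rw [hGval t (not_lt.1 hlt)]; exact Real.rpow_nonneg (hgnn t ht) β
  have hHval : ∀ t : ℝ, t ≤ b → H t = h t ^ β := by
    intro t ht; simp only [hHdef, if_neg (not_lt.2 ht)]
  have hH0 : ∀ t : ℝ, b < t → H t = 0 := by
    intro t ht; simp only [hHdef, if_pos ht, Real.zero_rpow hβ']
  have hHnn : ∀ t ∈ Icc (0:ℝ) δ, 0 ≤ H t := by
    intro t ht
    by_cases hlt : b < t
    · rw [hH0 t hlt]
    · rw [hHval t (not_lt.1 hlt)]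
      exact Real.rpow_nonneg (hnn t ⟨ht.1, not_lt.1 hlt⟩) β
  -- upper bound for h on [0,b]
  have hmhalf : b / 2 ∈ Icc (0:ℝ) b := ⟨by linarith, by linarith⟩
  have hub : ∀ t ∈ Icc (0:ℝ) b, h t ≤ 2 * h (b / 2) := by
    intro t ht
    have hnb := hnn b ⟨hb.le, le_refl b⟩
    have hnt := hnn t ht
    have hnm := hnn _ hmhalf
    rcases le_total t (b / 2) with h1 | h1
    · have key := conc3 hconc ht ⟨hb.le, le_refl b⟩ h1 hmhalf.2
      nlinarith [ht.1, ht.2]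
    · have key := conc3 hconc (⟨le_refl (0:ℝ), hb.le⟩ : (0:ℝ) ∈ Icc (0:ℝ) b) ht hmhalf.1 h1
      have hn0 := hnn 0 ⟨le_refl _, hb.le⟩
      nlinarith [ht.1, ht.2]
  -- integrability of H
  have hcont : ContinuousOn h (Ioo 0 b) := by
    have := hconc.continuousOn_interior; rwa [interior_Icc] at this
  have hIH_Ioo : IntegrableOn (fun t => h t ^ β) (Ioo 0 b) := by
    constructor
    · exact (Real.continuous_rpow_const hβ.le).comp_aestronglyMeasurable
        (hcont.aestronglyMeasurable measurableSet_Ioo)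
    · apply MeasureTheory.HasFiniteIntegral.of_bounded (C := (2 * h (b / 2)) ^ β)
      refine ae_restrict_of_forall_mem measurableSet_Ioo ?_
      intro t ht
      have h1 : (0:ℝ) ≤ h t := hnn t ⟨ht.1.le, ht.2.le⟩
      rw [Real.norm_eq_abs, abs_of_nonneg (Real.rpow_nonneg h1 β)]
      exact Real.rpow_le_rpow h1 (hub t ⟨ht.1.le, ht.2.le⟩) hβ.le
  have hIH1 : IntegrableOn H (Ioc 0 b) := by
    rw [integrableOn_Ioc_iff_integrableOn_Ioo]
    exact hIH_Ioo.congr_fun (fun t ht => (hHval t ht.2.le).symm) measurableSet_Ioo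
  have hIH2 : IntegrableOn H (Ioc b δ) := by
    exact (integrableOn_zero).congr_fun
      (fun t ht => (hH0 t ht.1).symm) measurableSet_Ioc
  have hHint : IntervalIntegrable H volume 0 δ := by
    rw [intervalIntegrable_iff_integrableOn_Ioc_of_le h0δ,
      ← Ioc_union_Ioc_eq_Ioc hb.le hbδ]
    exact hIH1.union hIH2
  have hHii : ∀ u v : ℝ, u ∈ Icc (0:ℝ) δ → v ∈ Icc (0:ℝ) δ →
      IntervalIntegrable H volume u v := by
    intro u v hu hv
    refine hHint.mono_set ?_
    rw [uIcc_of_le h0δ]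
    exact uIcc_subset_Icc hu hv
  -- integrability of G
  have hGmeas : Measurable G := by
    apply (Real.continuous_rpow_const hβ.le).measurable.comp
    exact Measurable.ite measurableSet_Iio measurable_const
      (measurable_const.mul (measurable_const.sub measurable_id))
  have hGint : IntervalIntegrable G volume 0 δ := by
    rw [intervalIntegrable_iff_integrableOn_Ioc_of_le h0δ]
    constructor
    · exact hGmeas.aestronglyMeasurable.restrict
    · apply MeasureTheory.HasFiniteIntegral.of_bounded (C := (c * δ) ^ β)
      refine ae_restrict_of_forall_mem measurableSet_Ioc ?_
      intro t ht
      rw [Real.norm_eq_abs, abs_of_nonneg (hGnn t ht.2)]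
      by_cases hlt : t < γ
      · rw [hG0 t hlt]
        exact Real.rpow_nonneg (by nlinarith) β
      · rw [hGval t (not_lt.1 hlt)]
        exact Real.rpow_le_rpow (hgnn t ht.2) (by nlinarith [ht.1]) hβ.le
  have hGii : ∀ u v : ℝ, u ∈ Icc (0:ℝ) δ → v ∈ Icc (0:ℝ) δ →
      IntervalIntegrable G volume u v := by
    intro u v hu hv
    refine hGint.mono_set ?_
    rw [uIcc_of_le h0δ]
    exact uIcc_subset_Icc hu hv
  -- vanishing integrals
  have hIH0 : ∀ u : ℝ, b ≤ u → u ≤ δ → (∫ t in u..δ, H t) = 0 := by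
    intro u h1 h2
    rw [integral_of_le h2, MeasureTheory.integral_Ioc_eq_integral_Ioo]
    rw [MeasureTheory.setIntegral_congr_fun measurableSet_Ioo
      (fun t (ht : t ∈ Ioo u δ) => hH0 t (lt_of_le_of_lt h1 ht.1))]
    simp
  have hIG0 : ∀ u : ℝ, 0 ≤ u → u ≤ γ → (∫ t in (0:ℝ)..u, G t) = 0 := by
    intro u h1 h2
    rw [integral_of_le h1, MeasureTheory.integral_Ioc_eq_integral_Ioo]
    rw [MeasureTheory.setIntegral_congr_fun measurableSet_Ioo
      (fun t (ht : t ∈ Ioo (0:ℝ) u) => hG0 t (lt_of_lt_of_le ht.2 h2))]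
    simp
  -- value identities
  have hIHval : ∀ u : ℝ, u ≤ b → (∫ t in u..b, H t) = ∫ t in u..b, h t ^ β := by
    intro u h1
    refine integral_congr fun t ht => ?_
    rw [uIcc_of_le h1] at ht
    exact hHval t ht.2
  have hIGval : ∀ u : ℝ, γ ≤ u → u ≤ δ → (∫ t in u..δ, G t) = ∫ t in u..δ, (c * (δ - t)) ^ β := by
    intro u h1 h2
    refine integral_congr fun t ht => ?_
    rw [uIcc_of_le h2] at ht
    exact hGval t (le_trans h1 ht.1)
  have hx₁Icc : x₁ ∈ Icc (0:ℝ) δ := ⟨le_trans hγ hx₁.le, le_trans hx₁b.le hbδ⟩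
  have hbIcc : b ∈ Icc (0:ℝ) δ := ⟨hb.le, hbδ⟩
  have h0Icc : (0:ℝ) ∈ Icc (0:ℝ) δ := ⟨le_refl _, h0δ⟩
  have hδIcc : δ ∈ Icc (0:ℝ) δ := ⟨h0δ, le_refl _⟩
  have hγIcc : γ ∈ Icc (0:ℝ) δ := ⟨hγ, hγδ.le⟩
  -- F(x₁) = 0
  have hHsplit : ∀ u : ℝ, u ∈ Icc (0:ℝ) δ → u ≤ b →
      (∫ t in u..δ, H t) = ∫ t in u..b, h t ^ β := by
    intro u hu h1
    rw [← integral_add_adjacent_intervals (hHii u b hu hbIcc) (hHii b δ hbIcc hδIcc),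
      hIH0 b (le_refl _) hbδ, hIHval u h1, add_zero]
  have hFx₁ : (∫ t in x₁..δ, H t) = ∫ t in x₁..δ, G t := by
    rw [hHsplit x₁ hx₁Icc hx₁b.le, hIGval x₁ hx₁.le hx₁Icc.2, htail]
  have hF0 : (∫ t in (0:ℝ)..δ, H t) = ∫ t in (0:ℝ)..δ, G t := by
    rw [hHsplit 0 h0Icc hb.le,
      ← integral_add_adjacent_intervals (hGii 0 γ h0Icc hγIcc) (hGii γ δ hγIcc hδIcc),
      hIG0 γ hγ (le_refl _), hIGval γ (le_refl _) hγδ.le, zero_add, htotal]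
  -- concavity of φ = h - g
  have hφconc : ConcaveOn ℝ (Icc (0:ℝ) b) (fun t => h t - c * (δ - t)) := by
    refine ⟨hconc.1, fun x hx y hy a a' ha ha' haa => ?_⟩
    have hh := hconc.2 hx hy ha ha' haa
    simp only [smul_eq_mul] at hh ⊢
    have : a * (c * (δ - x)) + a' * (c * (δ - y)) = c * (δ - (a * x + a' * y)) := by
      linear_combination (c * δ) * haa
    linarith
  -- Claim A : h ≤ g on [γ, x₁]
  have hA : ∀ t ∈ Icc γ x₁, h t ≤ c * (δ - t) := by
    intro t ht
    by_contra hlt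
    push_neg at hlt
    have htb : t ∈ Icc (0:ℝ) b := ⟨le_trans hγ ht.1, le_trans ht.2 hx₁b.le⟩
    have htx : t < x₁ := by
      rcases lt_or_eq_of_le ht.2 with h' | h'
      · exact h'
      · exfalso; rw [h'] at hlt; linarith [hcross]
    have hneg : ∀ u ∈ Ioc x₁ b, h u < c * (δ - u) := by
      intro u hu
      have humem : u ∈ Icc (0:ℝ) b := ⟨le_trans hx₁Icc.1 hu.1.le, hu.2⟩
      have key := conc3 hφconc htb humem (le_of_lt htx) (le_of_lt hu.1)
      nlinarith [hcross, hu.1, htx]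
    have hpos : 0 < ∫ u in x₁..b, (G u - H u) := by
      apply intervalIntegral_pos_of_pos_on
        ((hGii x₁ b hx₁Icc hbIcc).sub (hHii x₁ b hx₁Icc hbIcc))
      · intro u hu
        have h1 : γ ≤ u := le_trans hx₁.le hu.1.le
        have h2 : u ≤ b := hu.2.le
        rw [hGval u h1, hHval u h2, sub_pos]
        exact Real.rpow_lt_rpow (hnn u ⟨le_trans hγ h1, h2⟩)
          (hneg u ⟨hu.1, h2⟩) hβ
      · exact hx₁b
    have hnn2 : 0 ≤ ∫ u in b..δ, (G u - H u) := by
      rw [integral_sub (hGii b δ hbIcc hδIcc) (hHii b δ hbIcc hδIcc),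
        hIH0 b (le_refl _) hbδ, sub_zero]
      exact integral_nonneg hbδ (fun u hu => hGnn u hu.2)
    have hsum : (∫ u in x₁..b, (G u - H u)) + (∫ u in b..δ, (G u - H u))
        = ∫ u in x₁..δ, (G u - H u) :=
      integral_add_adjacent_intervals
        ((hGii x₁ b hx₁Icc hbIcc).sub (hHii x₁ b hx₁Icc hbIcc))
        ((hGii b δ hbIcc hδIcc).sub (hHii b δ hbIcc hδIcc))
    have hzero : (∫ u in x₁..δ, (G u - H u)) = 0 := by
      rw [integral_sub (hGii x₁ δ hx₁Icc hδIcc) (hHii x₁ δ hx₁Icc hδIcc), ← hFx₁, sub_self]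
    linarith
  -- main case analysis
  intro s hs
  show (∫ t in s..δ, H t) ≤ ∫ t in s..δ, G t
  have hsIcc : s ∈ Icc (0:ℝ) δ := hs
  rcases le_or_gt s γ with hcase1 | hcase1
  · -- s ≤ γ
    have eH : (∫ t in (0:ℝ)..s, H t) + (∫ t in s..δ, H t) = ∫ t in (0:ℝ)..δ, H t :=
      integral_add_adjacent_intervals (hHii 0 s h0Icc hsIcc) (hHii s δ hsIcc hδIcc)
    have eG : (∫ t in (0:ℝ)..s, G t) + (∫ t in s..δ, G t) = ∫ t in (0:ℝ)..δ, G t :=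
      integral_add_adjacent_intervals (hGii 0 s h0Icc hsIcc) (hGii s δ hsIcc hδIcc)
    have e1 : (∫ t in (0:ℝ)..s, G t) = 0 := hIG0 s hs.1 hcase1
    have e2 : 0 ≤ ∫ t in (0:ℝ)..s, H t :=
      integral_nonneg hs.1 (fun t ht => hHnn t ⟨ht.1, le_trans ht.2 hs.2⟩)
    linarith [hF0]
  rcases le_or_gt s x₁ with hcase2 | hcase2
  · -- γ < s ≤ x₁
    have eH : (∫ t in s..x₁, H t) + (∫ t in x₁..δ, H t) = ∫ t in s..δ, H t :=
      integral_add_adjacent_intervals (hHii s x₁ hsIcc hx₁Icc) (hHii x₁ δ hx₁Icc hδIcc)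
    have eG : (∫ t in s..x₁, G t) + (∫ t in x₁..δ, G t) = ∫ t in s..δ, G t :=
      integral_add_adjacent_intervals (hGii s x₁ hsIcc hx₁Icc) (hGii x₁ δ hx₁Icc hδIcc)
    have emono : (∫ t in s..x₁, H t) ≤ ∫ t in s..x₁, G t := by
      apply integral_mono_on hcase2 (hHii s x₁ hsIcc hx₁Icc) (hGii s x₁ hsIcc hx₁Icc)
      intro t ht
      have h1 : γ ≤ t := le_trans hcase1.le ht.1
      have h2 : t ≤ b := le_trans ht.2 hx₁b.le
      rw [hHval t h2, hGval t h1]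
      exact Real.rpow_le_rpow (hnn t ⟨le_trans hγ h1, h2⟩)
        (hA t ⟨h1, ht.2⟩) hβ.le
    linarith [hFx₁]
  rcases le_or_gt s b with hcase3 | hcase3
  · -- x₁ < s ≤ b
    have hsb : s ∈ Icc (0:ℝ) b := ⟨hs.1, hcase3⟩
    by_cases hφs : h s ≤ c * (δ - s)
    · -- φ(s) ≤ 0 : pointwise G ≥ H on [s, δ]
      apply integral_mono_on hs.2 (hHii s δ hsIcc hδIcc) (hGii s δ hsIcc hδIcc)
      intro t ht
      by_cases hbt : b < t
      · rw [hH0 t hbt]; exact hGnn t ht.2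
      · push_neg at hbt
        have htb : t ∈ Icc (0:ℝ) b := ⟨le_trans hs.1 ht.1, hbt⟩
        have hφt : h t ≤ c * (δ - t) := by
          have key := conc3 hφconc (⟨hx₁Icc.1, hx₁b.le⟩ : x₁ ∈ Icc (0:ℝ) b) htb
            (le_of_lt hcase2) ht.1
          nlinarith [hcross, hcase2, ht.1]
        rw [hHval t hbt, hGval t (le_trans hx₁.le (le_trans hcase2.le ht.1))]
        exact Real.rpow_le_rpow (hnn t htb) hφt hβ.le
    · -- φ(s) > 0 : φ ≥ 0 on [x₁, s]
      push_neg at hφs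
      have eH : (∫ t in x₁..s, H t) + (∫ t in s..δ, H t) = ∫ t in x₁..δ, H t :=
        integral_add_adjacent_intervals (hHii x₁ s hx₁Icc hsIcc) (hHii s δ hsIcc hδIcc)
      have eG : (∫ t in x₁..s, G t) + (∫ t in s..δ, G t) = ∫ t in x₁..δ, G t :=
        integral_add_adjacent_intervals (hGii x₁ s hx₁Icc hsIcc) (hGii s δ hsIcc hδIcc)
      have emono : (∫ t in x₁..s, G t) ≤ ∫ t in x₁..s, H t := by
        apply integral_mono_on hcase2.le (hGii x₁ s hx₁Icc hsIcc) (hHii x₁ s hx₁Icc hsIcc)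
        intro t ht
        have htb : t ∈ Icc (0:ℝ) b := ⟨le_trans hx₁Icc.1 ht.1, le_trans ht.2 hcase3⟩
        have hφt : c * (δ - t) ≤ h t := by
          have key := conc3 hφconc (⟨hx₁Icc.1, hx₁b.le⟩ : x₁ ∈ Icc (0:ℝ) b) hsb ht.1 ht.2
          nlinarith [hcross, hcase2, ht.1, ht.2]
        rw [hHval t htb.2, hGval t (le_trans hx₁.le ht.1)]
        exact Real.rpow_le_rpow (hgnn t (le_trans htb.2 hbδ)) hφt hβ.le
      linarith [hFx₁]
  · -- b < s
    rw [hIH0 s hcase3.le hs.2]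
    exact integral_nonneg hs.2 (fun t ht => hGnn t ht.2)
end

section
/- Let K⊂ℝⁿ be a convex body with centroid at the origin and let u be a unit vector. Writing f(t)=vol_{n-1}(K∩(tu+u^⊥)) with support [a,b], one has b/(b-a) ≥ 1/(n+1). -/
open MeasureTheory Set

theorem stmt_18 (n : ℕ) (K : Set (EuclideanSpace ℝ (Fin n)))
    (hKconv : Convex ℝ K) (hKcomp : IsCompact K) (hKint : (interior K).Nonempty)
    (hcent : (∫ x in K, x) = 0)
    (u : EuclideanSpace ℝ (Fin n)) (hu : ‖u‖ = 1)
    (a b : ℝ)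
    (ha : a = sInf ((fun x => (inner ℝ x u : ℝ)) '' K))
    (hb : b = sSup ((fun x => (inner ℝ x u : ℝ)) '' K)) :
    b / (b - a) ≥ 1 / (n + 1) := by
  set μ : Measure (EuclideanSpace ℝ (Fin n)) := volume with hμ
  set φ : EuclideanSpace ℝ (Fin n) → ℝ := fun x => (inner ℝ x u : ℝ) with hφ
  have hφc : Continuous φ := continuous_id.inner continuous_const
  have hKne : K.Nonempty := hKint.mono interior_subset
  have hScomp : IsCompact (φ '' K) := hKcomp.image hφc
  have hSne : (φ '' K).Nonempty := hKne.image φ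
  have hble : ∀ x ∈ K, φ x ≤ b := fun x hx => hb ▸ le_csSup hScomp.bddAbove ⟨x, hx, rfl⟩
  have hage : ∀ x ∈ K, a ≤ φ x := fun x hx => ha ▸ csInf_le hScomp.bddBelow ⟨x, hx, rfl⟩
  obtain ⟨z, hzK, hza⟩ : ∃ z ∈ K, φ z = a := by
    have := hScomp.sInf_mem hSne
    rw [← ha] at this
    obtain ⟨z, hz, hz'⟩ := this
    exact ⟨z, hz, hz'⟩
  have huu : (inner ℝ u u : ℝ) = 1 := by
    rw [real_inner_self_eq_norm_mul_norm, hu]; norm_num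
  -- pushing from interior points
  have hpush : ∀ x : EuclideanSpace ℝ (Fin n), ∀ ε : ℝ, 0 < ε → Metric.ball x ε ⊆ K →
      φ x + ε / 2 ≤ b ∧ a ≤ φ x - ε / 2 := by
    intro x ε hε hball
    have hmem : ∀ c : ℝ, |c| < ε → x + c • u ∈ K := by
      intro c hc
      apply hball
      rw [Metric.mem_ball, dist_eq_norm, add_sub_cancel_left, norm_smul, hu, mul_one,
        Real.norm_eq_abs]
      exact hc
    have habs : |ε / 2| < ε := by rw [abs_of_pos (by linarith)]; linarith
    have habs' : |-(ε / 2)| < ε := by rw [abs_neg]; exact habs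
    have h1 := hble _ (hmem (ε / 2) habs)
    have h2 := hage _ (hmem (-(ε / 2)) habs')
    have e1 : φ (x + (ε / 2) • u) = φ x + ε / 2 := by
      simp only [hφ, inner_add_left, real_inner_smul_left, huu, mul_one]
    have e2 : φ (x + (-(ε / 2)) • u) = φ x - ε / 2 := by
      simp only [hφ, inner_add_left, real_inner_smul_left, huu, mul_one]
      ring
    rw [e1] at h1
    rw [e2] at h2
    exact ⟨h1, h2⟩
  -- width is positive
  obtain ⟨x₀, hx₀⟩ := hKint
  obtain ⟨ε, hε, hball⟩ := Metric.isOpen_iff.mp isOpen_interior x₀ hx₀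
  have hball' : Metric.ball x₀ ε ⊆ K := hball.trans interior_subset
  obtain ⟨hb1, ha1⟩ := hpush x₀ ε hε hball'
  have hw : 0 < b - a := by linarith
  set w : ℝ := b - a with hwdef
  -- measure facts
  have hKmeas : MeasurableSet K := hKcomp.measurableSet
  have hμKpos : 0 < μ K := Measure.measure_pos_of_nonempty_interior μ ⟨x₀, hx₀⟩
  have hμKtop : μ K ≠ ⊤ := hKcomp.measure_lt_top.ne
  set V : ℝ := (μ K).toReal with hVdef
  have hVpos : 0 < V := ENNReal.toReal_pos hμKpos.ne' hμKtop
  set g : EuclideanSpace ℝ (Fin n) → ℝ := fun x => b - φ x with hgdef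
  have hgc : Continuous g := continuous_const.sub hφc
  have hgmeas : Measurable g := hgc.measurable
  have hgnn : 0 ≤ᵐ[μ.restrict K] g :=
    (ae_restrict_iff' hKmeas).mpr (ae_of_all _ fun x hx => sub_nonneg.mpr (hble x hx))
  -- the integral of g over K equals b * V
  have hφint : IntegrableOn φ K μ := hφc.continuousOn.integrableOn_compact hKcomp
  have hxint : IntegrableOn (fun x : EuclideanSpace ℝ (Fin n) => x) K μ :=
    continuous_id.continuousOn.integrableOn_compact hKcomp
  have hφ0 : ∫ x in K, φ x ∂μ = 0 := by
    have h1 : ∫ x in K, (inner ℝ u x : ℝ) ∂μ = (inner ℝ u (∫ x in K, x ∂μ) : ℝ) :=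
      integral_inner hxint u
    rw [hcent, inner_zero_right] at h1
    calc ∫ x in K, φ x ∂μ = ∫ x in K, (inner ℝ u x : ℝ) ∂μ := by
          simp only [hφ]
          exact integral_congr_ae (ae_of_all _ fun x => real_inner_comm u x)
      _ = 0 := h1
  have hgint : IntegrableOn g K μ :=
    (integrableOn_const (C := b) hKcomp.measure_lt_top.ne).sub hφint
  have hgval : ∫ x in K, g x ∂μ = b * V := by
    rw [hgdef]
    rw [integral_sub (integrableOn_const (C := b) hKcomp.measure_lt_top.ne) hφint, hφ0,
      sub_zero, setIntegral_const, smul_eq_mul, mul_comm, Measure.real]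
  -- the set where g ≤ 0 within K is null (it lies in the frontier)
  have hnull : μ (K ∩ {x | g x ≤ 0}) = 0 := by
    apply measure_mono_null _ (hKconv.addHaar_frontier μ)
    rintro x ⟨hxK, hxg⟩
    rw [frontier, mem_diff]
    refine ⟨subset_closure hxK, fun hxi => ?_⟩
    obtain ⟨ε', hε', hball2⟩ := Metric.isOpen_iff.mp isOpen_interior x hxi
    obtain ⟨h1, _⟩ := hpush x ε' hε' (hball2.trans interior_subset)
    have : b ≤ φ x := by simpa [hgdef] using hxg
    linarith
  have hKeq : μ (K ∩ {x | 0 < g x}) = μ K := by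
    refine le_antisymm (measure_mono inter_subset_left) ?_
    have hcover : K ⊆ (K ∩ {x | 0 < g x}) ∪ (K ∩ {x | g x ≤ 0}) := by
      intro x hx
      rcases lt_or_ge 0 (g x) with h | h
      · exact Or.inl ⟨hx, h⟩
      · exact Or.inr ⟨hx, h⟩
    calc μ K ≤ μ ((K ∩ {x | 0 < g x}) ∪ (K ∩ {x | g x ≤ 0})) := measure_mono hcover
      _ ≤ μ (K ∩ {x | 0 < g x}) + μ (K ∩ {x | g x ≤ 0}) := measure_union_le _ _
      _ = μ (K ∩ {x | 0 < g x}) := by rw [hnull, add_zero]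
  -- key superlevel set estimate
  have hkey : ∀ t ∈ Ioo (0 : ℝ) w,
      ENNReal.ofReal (((w - t) / w) ^ n) * μ K ≤ μ.restrict K {x | t < g x} := by
    intro t ht
    set s : ℝ := (w - t) / w with hsdef
    have hs0 : 0 < s := div_pos (by linarith [ht.2]) hw
    have hs1 : s ≤ 1 := by
      rw [hsdef, div_le_one hw]; linarith [ht.1]
    have hsub : (AffineMap.homothety z s) '' (K ∩ {x | 0 < g x}) ⊆ {x | t < g x} ∩ K := by
      rintro - ⟨x, ⟨hxK, hxg⟩, rfl⟩
      have himg : AffineMap.homothety z s x = s • x + (1 - s) • z := by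
        simp only [AffineMap.homothety_apply, vsub_eq_sub, vadd_eq_add, smul_sub, sub_smul,
          one_smul]
        abel
      have hmemK : s • x + (1 - s) • z ∈ K :=
        hKconv hxK hzK hs0.le (by linarith) (by ring)
      have hφval : φ (s • x + (1 - s) • z) = s * φ x + (1 - s) * a := by
        simp only [hφ, inner_add_left, real_inner_smul_left]
        rw [← hza]
      have hgval2 : g (s • x + (1 - s) • z) = s * g x + t := by
        simp only [hgdef, hφval]
        have : (1 - s) * w = t := by
          rw [hsdef]; field_simp; ring
        rw [hwdef] at this
        ring_nf
        ring_nf at this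
        linarith
      rw [himg]
      refine ⟨?_, hmemK⟩
      simp only [mem_setOf_eq, hgval2]
      have : 0 < s * g x := mul_pos hs0 hxg
      linarith
    have hmeas_lt : MeasurableSet {x | t < g x} := measurableSet_lt measurable_const hgmeas
    rw [Measure.restrict_apply hmeas_lt]
    calc ENNReal.ofReal (s ^ n) * μ K
        = ENNReal.ofReal |s ^ n| * μ (K ∩ {x | 0 < g x}) := by
          rw [hKeq, abs_of_nonneg (pow_nonneg hs0.le n)]
      _ = ENNReal.ofReal |s ^ Module.finrank ℝ (EuclideanSpace ℝ (Fin n))| * μ (K ∩ {x | 0 < g x}) := by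
          rw [finrank_euclideanSpace_fin]
      _ = μ ((AffineMap.homothety z s) '' (K ∩ {x | 0 < g x})) := by
          rw [Measure.addHaar_image_homothety]
      _ ≤ μ ({x | t < g x} ∩ K) := measure_mono hsub
  -- layer cake
  have hlayer : ∫⁻ x, ENNReal.ofReal (g x) ∂(μ.restrict K)
      = ∫⁻ t in Ioi (0 : ℝ), μ.restrict K {x | t < g x} :=
    lintegral_eq_lintegral_meas_lt (μ.restrict K) hgnn hgmeas.aemeasurable
  have hlhs : ∫⁻ x, ENNReal.ofReal (g x) ∂(μ.restrict K) = ENNReal.ofReal (b * V) := by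
    rw [← ofReal_integral_eq_lintegral_ofReal hgint hgnn, hgval]
  -- lower bound for the right-hand side
  have hfc : Continuous fun t : ℝ => ((w - t) / w) ^ n :=
    (((continuous_const.sub continuous_id).div_const w).pow n)
  have hcalc : ∫ t in Ioo (0 : ℝ) w, ((w - t) / w) ^ n = w / (n + 1) := by
    rw [← MeasureTheory.integral_Ioc_eq_integral_Ioo, ← intervalIntegral.integral_of_le hw.le]
    have h1 : ∫ t in (0 : ℝ)..w, ((w - t) / w) ^ n = (∫ t in (0 : ℝ)..w, (w - t) ^ n) / w ^ n := by
      simp_rw [div_pow]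
      exact intervalIntegral.integral_div _ _
    have h2 : ∫ t in (0 : ℝ)..w, (w - t) ^ n = w ^ (n + 1) / (n + 1) := by
      have := intervalIntegral.integral_comp_sub_left (a := (0 : ℝ)) (b := w)
        (fun y => y ^ n) w
      rw [this]
      simp [integral_pow]
    rw [h1, h2]
    have hw0 : w ≠ 0 := hw.ne'
    have hn0 : (n : ℝ) + 1 ≠ 0 := by positivity
    field_simp
    ring
  have hrhs : ENNReal.ofReal (w / (n + 1)) * μ K
      ≤ ∫⁻ t in Ioi (0 : ℝ), μ.restrict K {x | t < g x} := by
    have step1 : ∫⁻ t in Ioo (0 : ℝ) w, ENNReal.ofReal (((w - t) / w) ^ n) * μ K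
        ≤ ∫⁻ t in Ioo (0 : ℝ) w, μ.restrict K {x | t < g x} := by
      apply lintegral_mono_ae
      filter_upwards [ae_restrict_mem measurableSet_Ioo] with t ht
      exact hkey t ht
    have step2 : ∫⁻ t in Ioo (0 : ℝ) w, μ.restrict K {x | t < g x}
        ≤ ∫⁻ t in Ioi (0 : ℝ), μ.restrict K {x | t < g x} :=
      lintegral_mono_set (fun t ht => ht.1)
    have step3 : ∫⁻ t in Ioo (0 : ℝ) w, ENNReal.ofReal (((w - t) / w) ^ n) * μ K
        = ENNReal.ofReal (w / (n + 1)) * μ K := by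
      rw [lintegral_mul_const _ (by
        exact (ENNReal.measurable_ofReal.comp hfc.measurable))]
      congr 1
      rw [← ofReal_integral_eq_lintegral_ofReal]
      · rw [hcalc]
      · exact (hfc.integrableOn_Icc (a := 0) (b := w)).mono_set Ioo_subset_Icc_self
      · refine (ae_restrict_iff' measurableSet_Ioo).mpr (ae_of_all _ fun t ht => ?_)
        have : 0 ≤ (w - t) / w := div_nonneg (by linarith [ht.2]) hw.le
        positivity
    calc ENNReal.ofReal (w / (n + 1)) * μ K
        = ∫⁻ t in Ioo (0 : ℝ) w, ENNReal.ofReal (((w - t) / w) ^ n) * μ K := step3.symm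
      _ ≤ ∫⁻ t in Ioo (0 : ℝ) w, μ.restrict K {x | t < g x} := step1
      _ ≤ _ := step2
  -- combine
  have hcomb : ENNReal.ofReal (w / (n + 1) * V) ≤ ENNReal.ofReal (b * V) := by
    have hμKV : μ K = ENNReal.ofReal V := (ENNReal.ofReal_toReal hμKtop).symm
    calc ENNReal.ofReal (w / (n + 1) * V)
        = ENNReal.ofReal (w / (n + 1)) * ENNReal.ofReal V := by
          rw [ENNReal.ofReal_mul (by positivity)]
      _ = ENNReal.ofReal (w / (n + 1)) * μ K := by rw [hμKV]
      _ ≤ ∫⁻ t in Ioi (0 : ℝ), μ.restrict K {x | t < g x} := hrhs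
      _ = ENNReal.ofReal (b * V) := by rw [← hlayer, hlhs]
  have hreal : w / (n + 1) * V ≤ b * V := by
    rcases ENNReal.ofReal_le_ofReal_iff'.mp hcomb with h | h
    · exact h
    · exfalso
      have : 0 < w / (n + 1) * V := by positivity
      linarith
  have hfin : w / (n + 1) ≤ b := le_of_mul_le_mul_right hreal hVpos
  rw [ge_iff_le, div_le_div_iff₀ (by positivity) hw, one_mul]
  rw [div_le_iff₀ (by positivity : (0 : ℝ) < (n : ℝ) + 1)] at hfin
  linarith
end
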